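/- arXiv:1210.4076 — 9 statements merged into one kernel-verified Lean document; each statement's English description precedes it below -/
import Mathlib

section
/- Let (λ_n)_{n≥1} be a sequence of complex numbers with ∑_{n=1}^∞ |λ_n|² < ∞ and let z ∈ ℂ. Then the infinite products ∏_{n=1}^∞ (1 − zλ_n)·exp(zλ_n), ∏_{n=1}^∞ (1 + zλ_n)·exp(−zλ_n) and ∏_{n=1}^∞ (1 − z²λ_n²) are all multipliable, and ∏_{n=1}^∞ (1 − z²λ_n²) = (∏_{n=1}^∞ (1 − zλ_n)·exp(zλ_n)) · (∏_{n=1}^∞ (1 + zλ_n)·exp(−zλ_n)). -/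
open Complex

private lemma hasProd_zero_of_zero {f : ℕ → ℂ} {n : ℕ} (h : f n = 0) : HasProd f 0 := by
  have hev : ∀ᶠ s : Finset ℕ in Filter.atTop, (0 : ℂ) = ∏ i ∈ s, f i := by
    filter_upwards [Filter.eventually_ge_atTop {n}] with s hs
    exact (Finset.prod_eq_zero (by simpa using hs) h).symm
  exact Filter.Tendsto.congr' hev tendsto_const_nhds

private lemma multipliable_of_summable_norm_sub_one {f : ℕ → ℂ}
    (h : Summable fun n => ‖f n - 1‖) : Multipliable f := by
  by_cases hz : ∀ n, f n ≠ 0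
  · have ht : Filter.Tendsto (fun n => ‖f n - 1‖) Filter.atTop (nhds 0) :=
      h.tendsto_atTop_zero
    have hlog : Summable fun n => Complex.log (f n) := by
      apply Summable.of_norm_bounded_eventually (g := fun n => (3 / 2) * ‖f n - 1‖)
        (h.mul_left _)
      rw [Nat.cofinite_eq_atTop]
      filter_upwards [ht.eventually
        (eventually_le_nhds (by norm_num : (0 : ℝ) < 1 / 2))] with n hn
      have hb := Complex.norm_log_one_add_half_le_self (z := f n - 1) (by simpa using hn)
      have h1 : (1 : ℂ) + (f n - 1) = f n := by ring
      rw [h1] at hb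
      simpa using hb
    exact Complex.multipliable_of_summable_log hlog
  · push_neg at hz
    obtain ⟨n, hn⟩ := hz
    exact ⟨0, hasProd_zero_of_zero hn⟩

private lemma norm_one_sub_mul_exp_sub_one {w : ℂ} (hw : ‖w‖ ≤ 1) :
    ‖(1 - w) * Complex.exp w - 1‖ ≤ 3 * ‖w‖ ^ 2 := by
  have key : (1 - w) * Complex.exp w - 1
      = (Complex.exp w - 1 - w) - w * (Complex.exp w - 1) := by ring
  rw [key]
  have h1 : ‖Complex.exp w - 1 - w‖ ≤ ‖w‖ ^ 2 := by
    simpa using Complex.norm_exp_sub_one_sub_id_le (x := w) (by simpa using hw)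
  have h2 : ‖Complex.exp w - 1‖ ≤ 2 * ‖w‖ := by
    simpa using Complex.norm_exp_sub_one_le (x := w) (by simpa using hw)
  calc ‖(Complex.exp w - 1 - w) - w * (Complex.exp w - 1)‖
      ≤ ‖Complex.exp w - 1 - w‖ + ‖w * (Complex.exp w - 1)‖ := norm_sub_le _ _
    _ ≤ ‖w‖ ^ 2 + ‖w‖ * (2 * ‖w‖) := by
        rw [norm_mul]
        exact add_le_add h1 (mul_le_mul_of_nonneg_left h2 (norm_nonneg _))
    _ = 3 * ‖w‖ ^ 2 := by ring

/-- For a square-summable sequence `(λ n)` of complex numbers (the eigenvalues of a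
Hilbert–Schmidt operator) and any `z ∈ ℂ`, the products defining
`det₂(I - zK)`, `det₂(I + zK)` and `det₁(I - z²K²)` are multipliable and
`det₁(I - z²K²) = det₂(I - zK) · det₂(I + zK)`. -/
theorem stmt_0 (lam : ℕ → ℂ) (hlam : Summable fun n => ‖lam n‖ ^ 2) (z : ℂ) :
    Multipliable (fun n => (1 - z * lam n) * Complex.exp (z * lam n)) ∧
    Multipliable (fun n => (1 + z * lam n) * Complex.exp (-(z * lam n))) ∧
    Multipliable (fun n => 1 - z ^ 2 * lam n ^ 2) ∧
    (∏' n, (1 - z ^ 2 * lam n ^ 2)) =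
      (∏' n, (1 - z * lam n) * Complex.exp (z * lam n)) *
        (∏' n, (1 + z * lam n) * Complex.exp (-(z * lam n))) := by
  set w : ℕ → ℂ := fun n => z * lam n with hw
  have hw2 : Summable fun n => ‖w n‖ ^ 2 := by
    have : (fun n => ‖w n‖ ^ 2) = fun n => ‖z‖ ^ 2 * ‖lam n‖ ^ 2 := by
      funext n; rw [hw]; simp [norm_mul, mul_pow]
    rw [this]
    exact hlam.mul_left _
  have hev : ∀ᶠ n in Filter.atTop, ‖w n‖ ≤ 1 := by
    filter_upwards [hw2.tendsto_atTop_zero.eventually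
      (eventually_le_nhds (by norm_num : (0 : ℝ) < 1))] with n hn
    nlinarith [norm_nonneg (w n)]
  -- summability of the deviations from 1
  have hA : Summable fun n => ‖(1 - w n) * Complex.exp (w n) - 1‖ := by
    apply Summable.of_norm_bounded_eventually (g := fun n => 3 * ‖w n‖ ^ 2) (hw2.mul_left _)
    rw [Nat.cofinite_eq_atTop]
    filter_upwards [hev] with n hn
    simpa using norm_one_sub_mul_exp_sub_one hn
  have hB : Summable fun n => ‖(1 + w n) * Complex.exp (-w n) - 1‖ := by
    apply Summable.of_norm_bounded_eventually (g := fun n => 3 * ‖w n‖ ^ 2) (hw2.mul_left _)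
    rw [Nat.cofinite_eq_atTop]
    filter_upwards [hev] with n hn
    have := norm_one_sub_mul_exp_sub_one (w := -w n) (by simpa using hn)
    simpa [sub_neg_eq_add] using this
  have hC : Summable fun n => ‖(1 - w n ^ 2) - 1‖ := by
    have : (fun n => ‖(1 - w n ^ 2) - 1‖) = fun n => ‖w n‖ ^ 2 := by
      funext n
      simp [norm_pow]
    rw [this]; exact hw2
  have mA : Multipliable fun n => (1 - w n) * Complex.exp (w n) :=
    multipliable_of_summable_norm_sub_one hA
  have mB : Multipliable fun n => (1 + w n) * Complex.exp (-w n) :=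
    multipliable_of_summable_norm_sub_one hB
  have mC : Multipliable fun n => 1 - w n ^ 2 :=
    multipliable_of_summable_norm_sub_one hC
  have hptC : (fun n => (1 : ℂ) - z ^ 2 * lam n ^ 2) = fun n => 1 - w n ^ 2 := by
    funext n; rw [hw]; ring
  refine ⟨mA, by simpa [hw] using mB, by simpa [hptC] using mC, ?_⟩
  have hpt : ∀ n, (1 : ℂ) - z ^ 2 * lam n ^ 2
      = ((1 - w n) * Complex.exp (w n)) * ((1 + w n) * Complex.exp (-w n)) := by
    intro n
    have hexp : Complex.exp (w n) * Complex.exp (-w n) = 1 := by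
      rw [← Complex.exp_add]; simp
    calc (1 : ℂ) - z ^ 2 * lam n ^ 2 = (1 - w n) * (1 + w n) * 1 := by rw [hw]; ring
      _ = (1 - w n) * (1 + w n) * (Complex.exp (w n) * Complex.exp (-w n)) := by rw [hexp]
      _ = ((1 - w n) * Complex.exp (w n)) * ((1 + w n) * Complex.exp (-w n)) := by ring
  calc (∏' n, (1 - z ^ 2 * lam n ^ 2))
      = ∏' n, ((1 - w n) * Complex.exp (w n)) * ((1 + w n) * Complex.exp (-w n)) :=
        tprod_congr hpt
    _ = (∏' n, (1 - w n) * Complex.exp (w n)) * (∏' n, (1 + w n) * Complex.exp (-w n)) :=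
        mA.tprod_mul mB
    _ = (∏' n, (1 - z * lam n) * Complex.exp (z * lam n)) *
        (∏' n, (1 + z * lam n) * Complex.exp (-(z * lam n))) := by rw [hw]
end

section
/- Let (λ_n)_{n≥1} be a sequence of complex numbers with ∑_{n=1}^∞ |λ_n|³ < ∞ and let z ∈ ℂ. Then the infinite products ∏_{n=1}^∞ (1 − zλ_n)·exp(zλ_n + z²λ_n²/2), ∏_{n=1}^∞ (1 + zλ_n)·exp(−zλ_n + z²λ_n²/2) and ∏_{n=1}^∞ (1 − z²λ_n²)·exp(z²λ_n²) are all multipliable, and ∏_{n=1}^∞ (1 − z²λ_n²)·exp(z²λ_n²) = (∏_{n=1}^∞ (1 − zλ_n)·exp(zλ_n + z²λ_n²/2)) · (∏_{n=1}^∞ (1 + zλ_n)·exp(−zλ_n + z²λ_n²/2)). -/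
open Complex Filter Topology

/-- Cubic estimate for the third-modified Weierstrass factor. -/
lemma aux_est {w : ℂ} (hw : ‖w‖ ≤ 1/2) :
    ‖(1 - w) * Complex.exp (w + w ^ 2 / 2) - 1‖ ≤ 2 * ‖w‖ ^ 3 := by
  have hw1 : ‖w‖ < 1 := lt_of_le_of_lt hw (by norm_num)
  have hne : (1 : ℂ) - w ≠ 0 := by
    intro h
    have : w = 1 := by linear_combination -h
    rw [this] at hw; norm_num at hw
  set L : ℂ := Complex.log (1 - w) + (w + w ^ 2 / 2) with hLdef
  have hfact : (1 - w) * Complex.exp (w + w ^ 2 / 2) = Complex.exp L := by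
    conv_rhs => rw [hLdef, Complex.exp_add, Complex.exp_log hne]
  have hT : Complex.logTaylor 3 (-w) = -w - w ^ 2 / 2 := by
    simp [Complex.logTaylor, Finset.sum_range_succ]
    ring
  have hinv : (1 - ‖w‖)⁻¹ ≤ 2 := by
    rw [inv_le_comm₀ (by linarith) (by norm_num)]
    linarith
  have hL : ‖L‖ ≤ (2/3) * ‖w‖ ^ 3 := by
    have h0 := Complex.norm_log_sub_logTaylor_le 2 (z := -w) (by rwa [norm_neg])
    rw [hT, norm_neg] at h0
    have heq : Complex.log (1 + -w) - (-w - w ^ 2 / 2) = L := by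
      rw [hLdef]; ring_nf
    rw [heq] at h0
    calc ‖L‖ ≤ ‖w‖ ^ (2+1) * (1 - ‖w‖)⁻¹ / (2+1) := h0
      _ = ‖w‖ ^ 3 * (1 - ‖w‖)⁻¹ / 3 := by norm_num
      _ ≤ ‖w‖ ^ 3 * 2 / 3 := by gcongr
      _ = (2/3) * ‖w‖ ^ 3 := by ring
  have hw3 : ‖w‖ ^ 3 ≤ (1/2) ^ 3 := by gcongr
  have hL1 : ‖L‖ ≤ 1 := by
    refine hL.trans ?_
    nlinarith
  have hexp := Complex.norm_exp_sub_one_le (x := L) hL1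
  rw [hfact]
  calc ‖Complex.exp L - 1‖ ≤ 2 * ‖L‖ := hexp
    _ ≤ 2 * ((2/3) * ‖w‖ ^ 3) := by gcongr
    _ ≤ 2 * ‖w‖ ^ 3 := by nlinarith [pow_nonneg (norm_nonneg w) 3]

/-- A complex sequence whose distance to `1` is summable is multipliable. -/
lemma aux_mult (f : ℕ → ℂ) (h : Summable fun n => ‖f n - 1‖) : Multipliable f := by
  by_cases h0 : ∃ n, f n = 0
  · obtain ⟨n₀, hn₀⟩ := h0
    refine ⟨0, ?_⟩
    have hev : ∀ᶠ s : Finset ℕ in atTop, ∏ i ∈ s, f i = 0 := by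
      filter_upwards [Filter.eventually_ge_atTop {n₀}] with s hs
      exact Finset.prod_eq_zero (hs (Finset.mem_singleton_self n₀)) hn₀
    exact Tendsto.congr' (hev.mono fun s hs => hs.symm) tendsto_const_nhds
  · push_neg at h0
    have hlog : Summable fun n => Complex.log (f n) := by
      apply Summable.of_norm_bounded_eventually_nat (g := fun n => (3/2) * ‖f n - 1‖)
        (h.mul_left _)
      have htend : Tendsto (fun n => ‖f n - 1‖) atTop (𝓝 0) := h.tendsto_atTop_zero
      filter_upwards [htend.eventually_le_const (by norm_num : (0:ℝ) < 1/2)] with n hn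
      have := Complex.norm_log_one_add_half_le_self (z := f n - 1) hn
      simpa using this
    exact Complex.multipliable_of_summable_log hlog

/-- For a sequence `(λ n)` with `∑ ‖λ n‖³ < ∞` (eigenvalues of an operator in 𝒥₃)
and `z ∈ ℂ`, the products defining `det₃(I - zK)`, `det₃(I + zK)` and
`det₂(I - z²K²)` are multipliable and
`det₂(I - z²K²) = det₃(I - zK) · det₃(I + zK)`. -/
theorem stmt_2 (lam : ℕ → ℂ) (hlam : Summable fun n => ‖lam n‖ ^ 3) (z : ℂ) :
    Multipliable (fun n =>
      (1 - z * lam n) * Complex.exp (z * lam n + z ^ 2 * lam n ^ 2 / 2)) ∧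
    Multipliable (fun n =>
      (1 + z * lam n) * Complex.exp (-(z * lam n) + z ^ 2 * lam n ^ 2 / 2)) ∧
    Multipliable (fun n =>
      (1 - z ^ 2 * lam n ^ 2) * Complex.exp (z ^ 2 * lam n ^ 2)) ∧
    (∏' n, (1 - z ^ 2 * lam n ^ 2) * Complex.exp (z ^ 2 * lam n ^ 2)) =
      (∏' n, (1 - z * lam n) * Complex.exp (z * lam n + z ^ 2 * lam n ^ 2 / 2)) *
        (∏' n, (1 + z * lam n) * Complex.exp (-(z * lam n) + z ^ 2 * lam n ^ 2 / 2)) := by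
  -- eventual smallness of `z * lam n`
  have hsmall : ∀ᶠ n in atTop, ‖z * lam n‖ ≤ 1/2 := by
    have htend : Tendsto (fun n => ‖lam n‖ ^ 3) atTop (𝓝 0) := hlam.tendsto_atTop_zero
    have hε : (0:ℝ) < (1 / (2 * (‖z‖ + 1))) ^ 3 := by positivity
    filter_upwards [htend.eventually_le_const hε] with n hn
    have hl : ‖lam n‖ ≤ 1 / (2 * (‖z‖ + 1)) := by
      have h' : (0:ℝ) ≤ 1 / (2 * (‖z‖ + 1)) := by positivity
      exact (pow_le_pow_iff_left₀ (norm_nonneg (lam n)) h' (by norm_num)).mp hn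
    calc ‖z * lam n‖ = ‖z‖ * ‖lam n‖ := norm_mul z (lam n)
      _ ≤ (‖z‖ + 1) * (1 / (2 * (‖z‖ + 1))) :=
          mul_le_mul (by linarith) hl (norm_nonneg (lam n)) (by positivity)
      _ = 1/2 := by
          rw [mul_one_div, div_eq_div_iff (by positivity) (by norm_num)]
          ring
  have hbound : Summable fun n => 2 * ‖z‖ ^ 3 * ‖lam n‖ ^ 3 := hlam.mul_left _
  -- summability of distances to 1 for both factors
  have key : ∀ (s : ℝ), (s = 1 ∨ s = -1) → Summable fun n =>
      ‖(1 - (s : ℂ) * (z * lam n)) * Complex.exp ((s : ℂ) * (z * lam n) + z ^ 2 * lam n ^ 2 / 2) - 1‖ := by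
    intro s hs
    apply Summable.of_norm_bounded_eventually_nat (g := fun n => 2 * ‖z‖ ^ 3 * ‖lam n‖ ^ 3) hbound
    filter_upwards [hsmall] with n hn
    have hsn : ‖(s : ℂ) * (z * lam n)‖ ≤ 1/2 := by
      rcases hs with h | h <;> subst h <;> simpa [norm_mul] using hn
    have hsq : ((s : ℂ) * (z * lam n)) ^ 2 = z ^ 2 * lam n ^ 2 := by
      rcases hs with h | h <;> subst h <;> push_cast <;> ring
    have hest := aux_est hsn
    rw [hsq] at hest
    have hnorm3 : ‖(s : ℂ) * (z * lam n)‖ ^ 3 = ‖z‖ ^ 3 * ‖lam n‖ ^ 3 := by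
      rcases hs with h | h <;> subst h <;> simp [norm_mul, mul_pow]
    rw [hnorm3] at hest
    simpa [mul_assoc] using hest
  have key1 := key 1 (Or.inl rfl)
  have key2 := key (-1) (Or.inr rfl)
  simp only [Complex.ofReal_one, one_mul] at key1
  have key2' : Summable fun n =>
      ‖(1 + z * lam n) * Complex.exp (-(z * lam n) + z ^ 2 * lam n ^ 2 / 2) - 1‖ := by
    refine key2.congr fun n => ?_
    push_cast
    ring_nf
  have h1 : Multipliable (fun n =>
      (1 - z * lam n) * Complex.exp (z * lam n + z ^ 2 * lam n ^ 2 / 2)) := aux_mult _ key1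
  have h2 : Multipliable (fun n =>
      (1 + z * lam n) * Complex.exp (-(z * lam n) + z ^ 2 * lam n ^ 2 / 2)) := aux_mult _ key2'
  have hpt : ∀ n, (1 - z ^ 2 * lam n ^ 2) * Complex.exp (z ^ 2 * lam n ^ 2) =
      ((1 - z * lam n) * Complex.exp (z * lam n + z ^ 2 * lam n ^ 2 / 2)) *
        ((1 + z * lam n) * Complex.exp (-(z * lam n) + z ^ 2 * lam n ^ 2 / 2)) := by
    intro n
    have hexp : Complex.exp (z * lam n + z ^ 2 * lam n ^ 2 / 2) *
        Complex.exp (-(z * lam n) + z ^ 2 * lam n ^ 2 / 2) =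
        Complex.exp (z ^ 2 * lam n ^ 2) := by
      rw [← Complex.exp_add]; congr 1; ring
    rw [← hexp]; ring
  have h3 : Multipliable (fun n =>
      (1 - z ^ 2 * lam n ^ 2) * Complex.exp (z ^ 2 * lam n ^ 2)) :=
    (h1.mul h2).congr fun n => (hpt n).symm
  refine ⟨h1, h2, h3, ?_⟩
  calc (∏' n, (1 - z ^ 2 * lam n ^ 2) * Complex.exp (z ^ 2 * lam n ^ 2))
      = ∏' n, ((1 - z * lam n) * Complex.exp (z * lam n + z ^ 2 * lam n ^ 2 / 2)) *
          ((1 + z * lam n) * Complex.exp (-(z * lam n) + z ^ 2 * lam n ^ 2 / 2)) :=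
        tprod_congr hpt
    _ = _ := h1.tprod_mul h2
end

section
/- Let (λ_n)_{n≥1} be a sequence of complex numbers with ∑_{n=1}^∞ |λ_n|⁴ < ∞ and let z ∈ ℂ. Then the infinite products ∏_{n=1}^∞ (1 − zλ_n)·exp(zλ_n + z²λ_n²/2 + z³λ_n³/3), ∏_{n=1}^∞ (1 + zλ_n)·exp(−zλ_n + z²λ_n²/2 − z³λ_n³/3) and ∏_{n=1}^∞ (1 − z²λ_n²)·exp(z²λ_n²) are all multipliable, and ∏_{n=1}^∞ (1 − z²λ_n²)·exp(z²λ_n²) = (∏_{n=1}^∞ (1 − zλ_n)·exp(zλ_n + z²λ_n²/2 + z³λ_n³/3)) · (∏_{n=1}^∞ (1 + zλ_n)·exp(−zλ_n + z²λ_n²/2 − z³λ_n³/3)). -/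
open Complex

private lemma multA (f : ℕ → ℂ) (hf : Summable fun n => ‖f n - 1‖) : Multipliable f := by
  by_cases hz : ∃ n, f n = 0
  · obtain ⟨n₀, h0⟩ := hz
    refine ⟨0, ?_⟩
    have hev : ∀ᶠ s : Finset ℕ in Filter.atTop, (0 : ℂ) = ∏ i ∈ s, f i := by
      filter_upwards [Filter.eventually_ge_atTop {n₀}] with s hs
      exact (Finset.prod_eq_zero (by simpa using hs) h0).symm
    exact Filter.Tendsto.congr' hev tendsto_const_nhds
  · push_neg at hz
    have hlog : Summable fun n => Complex.log (f n) := by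
      have hsmall : ∀ᶠ n in Filter.atTop, ‖f n - 1‖ ≤ 1 / 2 :=
        hf.tendsto_atTop_zero.eventually (eventually_le_nhds (by norm_num))
      refine Summable.of_norm_bounded_eventually_nat (g := fun n => 3 / 2 * ‖f n - 1‖)
        (hf.mul_left _) ?_
      filter_upwards [hsmall] with n hn
      have := Complex.norm_log_one_add_half_le_self (z := f n - 1) hn
      simpa using this
    exact Complex.multipliable_of_summable_log hlog

private lemma boundE3 (w : ℂ) (hw : ‖w‖ ≤ 1 / 2) :
    ‖(1 - w) * Complex.exp (w + w ^ 2 / 2 + w ^ 3 / 3) - 1‖ ≤ ‖w‖ ^ 4 := by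
  have hw1 : ‖w‖ < 1 := lt_of_le_of_lt hw (by norm_num)
  have hne : (1 : ℂ) - w ≠ 0 := by
    intro h
    have : w = 1 := by linear_combination -h
    rw [this] at hw1; simp at hw1
  have hT : Complex.logTaylor 4 (-w) = -w - w ^ 2 / 2 - w ^ 3 / 3 := by
    simp [Complex.logTaylor, Finset.sum_range_succ]
    ring
  set u : ℂ := Complex.log (1 - w) + (w + w ^ 2 / 2 + w ^ 3 / 3) with hu
  have hkey : (1 - w) * Complex.exp (w + w ^ 2 / 2 + w ^ 3 / 3) = Complex.exp u := by
    conv_rhs => rw [hu, Complex.exp_add, Complex.exp_log hne]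
  have hub : ‖u‖ ≤ ‖w‖ ^ 4 / 2 := by
    have h := Complex.norm_log_sub_logTaylor_le 3 (z := -w) (by simpa using hw1)
    rw [hT] at h
    have heq : Complex.log (1 + -w) - (-w - w ^ 2 / 2 - w ^ 3 / 3) = u := by
      rw [hu]; ring_nf
    rw [heq] at h
    have hnn : ‖-w‖ = ‖w‖ := norm_neg w
    rw [hnn] at h
    refine h.trans ?_
    have h2 : (1 - ‖w‖)⁻¹ ≤ 2 := by
      rw [inv_le_comm₀ (by linarith) (by norm_num)]
      linarith
    have hw4 : (0 : ℝ) ≤ ‖w‖ ^ (3 + 1) := pow_nonneg (norm_nonneg w) _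
    calc ‖w‖ ^ (3 + 1) * (1 - ‖w‖)⁻¹ / (3 + 1)
        ≤ ‖w‖ ^ (3 + 1) * 2 / (3 + 1) := by
          gcongr
      _ = ‖w‖ ^ 4 / 2 := by push_cast; ring
  have hu1 : ‖u‖ ≤ 1 := by
    refine hub.trans ?_
    have : ‖w‖ ^ 4 ≤ (1 / 2 : ℝ) ^ 4 := pow_le_pow_left₀ (norm_nonneg w) hw 4
    nlinarith
  have hexp : ‖Complex.exp u - 1‖ ≤ 2 * ‖u‖ := Complex.norm_exp_sub_one_le hu1
  rw [hkey]
  calc ‖Complex.exp u - 1‖ ≤ 2 * ‖u‖ := hexp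
    _ ≤ 2 * (‖w‖ ^ 4 / 2) := by linarith
    _ = ‖w‖ ^ 4 := by ring

/-- For a sequence `(λ n)` with `∑ ‖λ n‖⁴ < ∞` (eigenvalues of an operator in 𝒥₄)
and `z ∈ ℂ`, the products defining `det₄(I - zK)`, `det₄(I + zK)` and
`det₂(I - z²K²)` are multipliable and
`det₂(I - z²K²) = det₄(I - zK) · det₄(I + zK)`. -/
theorem stmt_3 (lam : ℕ → ℂ) (hlam : Summable fun n => ‖lam n‖ ^ 4) (z : ℂ) :
    Multipliable (fun n => (1 - z * lam n) *
      Complex.exp (z * lam n + z ^ 2 * lam n ^ 2 / 2 + z ^ 3 * lam n ^ 3 / 3)) ∧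
    Multipliable (fun n => (1 + z * lam n) *
      Complex.exp (-(z * lam n) + z ^ 2 * lam n ^ 2 / 2 - z ^ 3 * lam n ^ 3 / 3)) ∧
    Multipliable (fun n =>
      (1 - z ^ 2 * lam n ^ 2) * Complex.exp (z ^ 2 * lam n ^ 2)) ∧
    (∏' n, (1 - z ^ 2 * lam n ^ 2) * Complex.exp (z ^ 2 * lam n ^ 2)) =
      (∏' n, (1 - z * lam n) *
        Complex.exp (z * lam n + z ^ 2 * lam n ^ 2 / 2 + z ^ 3 * lam n ^ 3 / 3)) *
        (∏' n, (1 + z * lam n) *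
          Complex.exp (-(z * lam n) + z ^ 2 * lam n ^ 2 / 2 - z ^ 3 * lam n ^ 3 / 3)) := by
  have hsum : Summable fun n => ‖z * lam n‖ ^ 4 := by
    refine (hlam.mul_left (‖z‖ ^ 4)).congr fun n => ?_
    rw [norm_mul, mul_pow]
  have hsmall : ∀ᶠ n in Filter.atTop, ‖z * lam n‖ ≤ 1 / 2 := by
    have h0 := hsum.tendsto_atTop_zero
    filter_upwards [h0.eventually (eventually_le_nhds (show (0:ℝ) < (1/2)^4 by norm_num))]
      with n hn
    have := (pow_le_pow_iff_left₀ (norm_nonneg _) (by norm_num : (0:ℝ) ≤ 1/2)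
      (by norm_num : 4 ≠ 0)).mp hn
    exact this
  -- first product
  have h1 : Multipliable (fun n => (1 - z * lam n) *
      Complex.exp (z * lam n + z ^ 2 * lam n ^ 2 / 2 + z ^ 3 * lam n ^ 3 / 3)) := by
    refine multA _ (Summable.of_norm_bounded_eventually_nat (g := fun n => ‖z * lam n‖ ^ 4) hsum ?_)
    filter_upwards [hsmall] with n hn
    have hb := boundE3 (z * lam n) hn
    have harg : z * lam n + (z * lam n) ^ 2 / 2 + (z * lam n) ^ 3 / 3
        = z * lam n + z ^ 2 * lam n ^ 2 / 2 + z ^ 3 * lam n ^ 3 / 3 := by ring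
    rw [harg] at hb
    simpa using hb
  have h2 : Multipliable (fun n => (1 + z * lam n) *
      Complex.exp (-(z * lam n) + z ^ 2 * lam n ^ 2 / 2 - z ^ 3 * lam n ^ 3 / 3)) := by
    refine multA _ (Summable.of_norm_bounded_eventually_nat (g := fun n => ‖z * lam n‖ ^ 4) hsum ?_)
    filter_upwards [hsmall] with n hn
    have hb := boundE3 (-(z * lam n)) (by simpa using hn)
    have harg : -(z * lam n) + (-(z * lam n)) ^ 2 / 2 + (-(z * lam n)) ^ 3 / 3
        = -(z * lam n) + z ^ 2 * lam n ^ 2 / 2 - z ^ 3 * lam n ^ 3 / 3 := by ring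
    have h1mw : (1 : ℂ) - -(z * lam n) = 1 + z * lam n := by ring
    rw [harg, h1mw, norm_neg] at hb
    simpa using hb
  have hfg : ∀ n, (1 - z ^ 2 * lam n ^ 2) * Complex.exp (z ^ 2 * lam n ^ 2) =
      ((1 - z * lam n) *
        Complex.exp (z * lam n + z ^ 2 * lam n ^ 2 / 2 + z ^ 3 * lam n ^ 3 / 3)) *
      ((1 + z * lam n) *
        Complex.exp (-(z * lam n) + z ^ 2 * lam n ^ 2 / 2 - z ^ 3 * lam n ^ 3 / 3)) := by
    intro n
    rw [mul_mul_mul_comm, ← Complex.exp_add]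
    have hadd : (z * lam n + z ^ 2 * lam n ^ 2 / 2 + z ^ 3 * lam n ^ 3 / 3) +
        (-(z * lam n) + z ^ 2 * lam n ^ 2 / 2 - z ^ 3 * lam n ^ 3 / 3) = z ^ 2 * lam n ^ 2 := by
      ring
    rw [hadd]
    ring_nf
  have h3 : Multipliable (fun n =>
      (1 - z ^ 2 * lam n ^ 2) * Complex.exp (z ^ 2 * lam n ^ 2)) :=
    (h1.mul h2).congr fun n => (hfg n).symm
  refine ⟨h1, h2, h3, ?_⟩
  rw [tprod_congr hfg]
  exact h1.tprod_mul h2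
end

section
/- Let p ≥ 3 be an integer, let (λ_n)_{n≥1} be a sequence of complex numbers with ∑_{n=1}^∞ |λ_n|^{2p} < ∞, and let z ∈ ℂ. Then the infinite products ∏_{n=1}^∞ E_{2p}(−zλ_n), ∏_{n=1}^∞ E_{2p}(zλ_n), ∏_{n=1}^∞ E_p(z²λ_n²) and ∏_{n=1}^∞ E_{⌈p/2⌉}(−z⁴λ_n⁴) are all multipliable, and (∏_{n=1}^∞ E_{2p}(−zλ_n)) · (∏_{n=1}^∞ E_{2p}(zλ_n)) · (∏_{n=1}^∞ E_p(z²λ_n²)) = ∏_{n=1}^∞ E_{⌈p/2⌉}(−z⁴λ_n⁴). -/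
open Complex

/-- The Weierstrass-type factor `E_p(w) = (1+w)·exp(∑_{j=1}^{p-1} (-w)^j / j)`. -/
noncomputable def weierstrassFactor (p : ℕ) (w : ℂ) : ℂ :=
  (1 + w) * Complex.exp (∑ j ∈ Finset.Icc 1 (p - 1), (-w) ^ j / (j : ℂ))

lemma wf_sum_eq_neg_logTaylor (q : ℕ) (hq : 1 ≤ q) (w : ℂ) :
    ∑ j ∈ Finset.Icc 1 (q - 1), (-w) ^ j / (j : ℂ) = - Complex.logTaylor q w := by
  have hset : Finset.Icc 1 (q - 1) = (Finset.range q).erase 0 := by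
    ext j; simp; omega
  rw [hset, Finset.sum_erase _ (by simp), Complex.logTaylor, ← Finset.sum_neg_distrib]
  apply Finset.sum_congr rfl
  intro j _
  rw [neg_pow, pow_succ]
  ring

lemma wf_eq_exp (q : ℕ) (hq : 1 ≤ q) {w : ℂ} (hw : ‖w‖ < 1) :
    weierstrassFactor q w = Complex.exp (Complex.log (1 + w) - Complex.logTaylor q w) := by
  have h1 : (1 : ℂ) + w ≠ 0 := by
    intro h
    have : ‖w‖ = 1 := by
      have : w = -1 := by linear_combination h
      simp [this]
    linarith
  rw [weierstrassFactor, wf_sum_eq_neg_logTaylor q hq, sub_eq_add_neg, Complex.exp_add,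
    Complex.exp_log h1]

lemma wf_remainder_bound (q : ℕ) (hq : 1 ≤ q) {w : ℂ} (hw : ‖w‖ ≤ 1 / 2) :
    ‖Complex.log (1 + w) - Complex.logTaylor q w‖ ≤ 2 * ‖w‖ ^ q := by
  obtain ⟨n, rfl⟩ : ∃ n, q = n + 1 := ⟨q - 1, by omega⟩
  have hw1 : ‖w‖ < 1 := by linarith
  refine (Complex.norm_log_sub_logTaylor_le n hw1).trans ?_
  have h0 : (0:ℝ) ≤ ‖w‖ ^ (n+1) := by positivity
  have h2 : (1 - ‖w‖)⁻¹ ≤ 2 := by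
    rw [inv_le_comm₀ (by linarith [norm_nonneg w]) (by norm_num)]
    linarith
  calc ‖w‖ ^ (n + 1) * (1 - ‖w‖)⁻¹ / (n + 1)
      ≤ ‖w‖ ^ (n + 1) * 2 / 1 := by
        apply div_le_div₀ (by positivity) (by nlinarith) one_pos
        exact_mod_cast Nat.one_le_iff_ne_zero.mpr (by omega)
    _ = 2 * ‖w‖ ^ (n + 1) := by ring

lemma multipliable_wf (q : ℕ) (hq : 1 ≤ q) (a : ℕ → ℂ)
    (ha : Summable fun n => ‖a n‖ ^ q) :
    Multipliable fun n => weierstrassFactor q (a n) := by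
  by_cases hzero : ∃ k, weierstrassFactor q (a k) = 0
  · obtain ⟨k, hk⟩ := hzero
    refine ⟨0, ?_⟩
    have : ∀ᶠ s : Finset ℕ in Filter.atTop, ({k} : Finset ℕ) ≤ s :=
      Filter.eventually_ge_atTop _
    apply Filter.Tendsto.congr' _ tendsto_const_nhds
    filter_upwards [this] with s hs
    exact (Finset.prod_eq_zero (hs (Finset.mem_singleton_self k)) hk).symm
  · push_neg at hzero
    have hev : ∀ᶠ n in Filter.atTop, ‖a n‖ ≤ 1 / 2 := by
      have h1 := ha.tendsto_atTop_zero
      have h2 := h1.eventually_le_const (show (0:ℝ) < (1/2) ^ q by positivity)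
      filter_upwards [h2] with n hn
      exact (pow_le_pow_iff_left₀ (norm_nonneg _) (by norm_num) (by omega)).mp hn
    have hsum : Summable fun n => Complex.log (weierstrassFactor q (a n)) := by
      apply Summable.of_norm_bounded_eventually_nat (g := fun n => 2 * ‖a n‖ ^ q) (ha.mul_left 2)
      filter_upwards [hev] with n hn
      have hbd := wf_remainder_bound q hq hn
      have hp1 : ‖a n‖ ^ q ≤ (1/2 : ℝ) ^ q := pow_le_pow_left₀ (norm_nonneg _) hn q
      have hp2 : ((1:ℝ)/2) ^ q ≤ (1/2 : ℝ) ^ 1 :=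
        pow_le_pow_of_le_one (by norm_num) (by norm_num) hq
      have hR1 : ‖Complex.log (1 + a n) - Complex.logTaylor q (a n)‖ ≤ 1 := by
        refine hbd.trans ?_
        nlinarith
      have him : |(Complex.log (1 + a n) - Complex.logTaylor q (a n)).im| ≤
          ‖Complex.log (1 + a n) - Complex.logTaylor q (a n)‖ := by
        exact Complex.abs_im_le_norm _
      rw [abs_le] at him
      have hpi := Real.pi_gt_three
      rw [wf_eq_exp q hq (lt_of_le_of_lt hn (by norm_num)), Complex.log_exp]
      · exact hbd
      · linarith
      · linarith
    exact Complex.multipliable_of_summable_log hsum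

lemma sum_even_combine (v : ℂ) (N : ℕ) :
    ∑ j ∈ Finset.Icc 1 N, ((v ^ j + (-v) ^ j) / (j : ℂ)) =
      ∑ k ∈ Finset.Icc 1 (N / 2), (v ^ 2) ^ k / (k : ℂ) := by
  induction N with
  | zero => simp
  | succ N ih =>
    rw [Finset.sum_Icc_succ_top (by omega : 1 ≤ N + 1), ih]
    rcases Nat.even_or_odd (N + 1) with he | ho
    · obtain ⟨m, hm⟩ := he
      have hm2 : N + 1 = 2 * m := by omega
      have hm1 : 1 ≤ m := by omega
      rw [show (N + 1) / 2 = m by omega, show N / 2 = m - 1 by omega]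
      have htop := Finset.sum_Icc_succ_top (a := 1) (b := m - 1) (by omega)
        (fun k => (v ^ 2) ^ k / (k : ℂ))
      rw [show m - 1 + 1 = m by omega] at htop
      rw [htop]
      congr 1
      have hev2 : (-v) ^ (N + 1) = v ^ (N + 1) := Even.neg_pow ⟨m, by omega⟩ v
      have hc : ((N + 1 : ℕ) : ℂ) = 2 * (m : ℂ) := by exact_mod_cast congrArg Nat.cast hm2
      have hv : (v ^ 2) ^ m = v ^ (N + 1) := by rw [← pow_mul, ← hm2]
      have hm0 : (m : ℂ) ≠ 0 := by exact_mod_cast (by omega : m ≠ 0)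
      rw [hev2, hv, hc]
      have h2 : (2 : ℂ) ≠ 0 := by norm_num
      field_simp
      ring
    · obtain ⟨l, hl⟩ := ho
      have h1 : (N + 1) / 2 = N / 2 := by omega
      rw [h1]
      have : (-v) ^ (N + 1) = -(v ^ (N + 1)) := Odd.neg_pow ⟨l, hl⟩ v
      rw [this]
      simp

lemma wf_identity (p : ℕ) (hp : 1 ≤ p) (w : ℂ) :
    weierstrassFactor (2 * p) (-w) * weierstrassFactor (2 * p) w *
      weierstrassFactor p (w ^ 2) = weierstrassFactor ((p + 1) / 2) (-(w ^ 4)) := by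
  have key : ∀ a b c x y u : ℂ, (a * Complex.exp x) * (b * Complex.exp y) * (c * Complex.exp u)
      = (a * b * c) * Complex.exp (x + y + u) := by
    intros; rw [Complex.exp_add, Complex.exp_add]; ring
  unfold weierstrassFactor
  rw [key]
  congr 1
  · ring
  congr 1
  have h12 : ∑ j ∈ Finset.Icc 1 (2 * p - 1), (- -w) ^ j / (j : ℂ) +
      ∑ j ∈ Finset.Icc 1 (2 * p - 1), (-w) ^ j / (j : ℂ) =
      ∑ k ∈ Finset.Icc 1 (p - 1), (w ^ 2) ^ k / (k : ℂ) := by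
    rw [← Finset.sum_add_distrib]
    have h := sum_even_combine w (2 * p - 1)
    rw [show (2 * p - 1) / 2 = p - 1 by omega] at h
    rw [← h]
    apply Finset.sum_congr rfl
    intro j _
    rw [neg_neg]
    ring
  rw [h12, ← Finset.sum_add_distrib]
  have h := sum_even_combine (w ^ 2) (p - 1)
  rw [show (p - 1) / 2 = (p + 1) / 2 - 1 by omega] at h
  calc ∑ k ∈ Finset.Icc 1 (p - 1), ((w ^ 2) ^ k / (k : ℂ) + (-w ^ 2) ^ k / (k : ℂ))
      = ∑ k ∈ Finset.Icc 1 (p - 1), ((w ^ 2) ^ k + (-(w ^ 2)) ^ k) / (k : ℂ) := by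
        apply Finset.sum_congr rfl; intro k _; rw [neg_pow, neg_pow]; ring
    _ = ∑ k ∈ Finset.Icc 1 ((p + 1) / 2 - 1), ((w ^ 2) ^ 2) ^ k / (k : ℂ) := h
    _ = ∑ j ∈ Finset.Icc 1 ((p + 1) / 2 - 1), (- -w ^ 4) ^ j / (j : ℂ) := by
        apply Finset.sum_congr rfl; intro k _
        rw [neg_neg, ← pow_mul, ← pow_mul, show 2 * (2 * k) = 4 * k by ring, pow_mul]

/-- For `p ≥ 3` and a sequence `(λ n)` with `∑ ‖λ n‖^(2p) < ∞` (eigenvalues of an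
operator in 𝒥_{2p}) and `z ∈ ℂ`, the products defining `det_{2p}(I - zK)`,
`det_{2p}(I + zK)`, `det_p(I + z²K²)` and `det_{⌈p/2⌉}(I - z⁴K⁴)` are multipliable
and `det_{2p}(I - zK) · det_{2p}(I + zK) · det_p(I + z²K²) = det_{⌈p/2⌉}(I - z⁴K⁴)`. -/
theorem stmt_5 (p : ℕ) (hp : 3 ≤ p) (lam : ℕ → ℂ)
    (hlam : Summable fun n => ‖lam n‖ ^ (2 * p)) (z : ℂ) :
    Multipliable (fun n => weierstrassFactor (2 * p) (-(z * lam n))) ∧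
    Multipliable (fun n => weierstrassFactor (2 * p) (z * lam n)) ∧
    Multipliable (fun n => weierstrassFactor p (z ^ 2 * lam n ^ 2)) ∧
    Multipliable (fun n => weierstrassFactor ((p + 1) / 2) (-(z ^ 4 * lam n ^ 4))) ∧
    (∏' n, weierstrassFactor (2 * p) (-(z * lam n))) *
        (∏' n, weierstrassFactor (2 * p) (z * lam n)) *
        (∏' n, weierstrassFactor p (z ^ 2 * lam n ^ 2)) =
      ∏' n, weierstrassFactor ((p + 1) / 2) (-(z ^ 4 * lam n ^ 4)) := by
  have hs1 : Summable fun n => ‖z * lam n‖ ^ (2 * p) := by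
    refine (hlam.mul_left (‖z‖ ^ (2 * p))).congr fun n => ?_
    rw [norm_mul, mul_pow]
  have hs1' : Summable fun n => ‖-(z * lam n)‖ ^ (2 * p) := by
    simpa using hs1
  have hs2 : Summable fun n => ‖z ^ 2 * lam n ^ 2‖ ^ p := by
    refine hs1.congr fun n => ?_
    rw [norm_mul, norm_mul, norm_pow, norm_pow, ← mul_pow, ← pow_mul]
  have m1 : Multipliable (fun n => weierstrassFactor (2 * p) (-(z * lam n))) :=
    multipliable_wf (2 * p) (by omega) _ hs1'
  have m2 : Multipliable (fun n => weierstrassFactor (2 * p) (z * lam n)) :=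
    multipliable_wf (2 * p) (by omega) _ hs1
  have m3 : Multipliable (fun n => weierstrassFactor p (z ^ 2 * lam n ^ 2)) :=
    multipliable_wf p (by omega) _ hs2
  have hident : ∀ n, weierstrassFactor (2 * p) (-(z * lam n)) *
      weierstrassFactor (2 * p) (z * lam n) *
      weierstrassFactor p (z ^ 2 * lam n ^ 2) =
      weierstrassFactor ((p + 1) / 2) (-(z ^ 4 * lam n ^ 4)) := by
    intro n
    have := wf_identity p (by omega) (z * lam n)
    rw [mul_pow, show (z * lam n) ^ 4 = z ^ 4 * lam n ^ 4 by ring] at this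
    exact this
  have m4 : Multipliable (fun n => weierstrassFactor ((p + 1) / 2) (-(z ^ 4 * lam n ^ 4))) := by
    refine ((m1.mul m2).mul m3).congr fun n => ?_
    exact hident n
  refine ⟨m1, m2, m3, m4, ?_⟩
  rw [← Multipliable.tprod_mul m1 m2, ← Multipliable.tprod_mul (m1.mul m2) m3]
  exact tprod_congr hident
end

section
/- Let p ≥ 1 be an integer and let (λ_n)_{n≥1} be a sequence of complex numbers with ∑_{n=1}^∞ |λ_n|^p < ∞. For each N ≥ 1 let λ_{1,N}, …, λ_{N,N} ∈ ℂ, and assume: (i) sup_{N≥1} ∑_{n=1}^N |λ_{n,N}|^p < ∞, and (ii) ∑_{n=1}^N |λ_{n,N} − λ_n| → 0 as N → ∞. Then for every M > 0, sup_{|z| ≤ M} |∏_{n=1}^N E_p(zλ_{n,N}) − ∏_{n=1}^∞ E_p(zλ_n)| → 0 as N → ∞; that is, the approximate p-modified determinants converge to the p-modified Fredholm determinant uniformly on every bounded set of z. -/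
open Complex

namespace StmtSixAux


lemma wf_zero (p : ℕ) : weierstrassFactor p 0 = 1 := by
  have h : ∀ j ∈ Finset.Icc 1 (p - 1), (-(0 : ℂ)) ^ j / (j : ℂ) = 0 := by
    intro j hj
    have h1 : 1 ≤ j := (Finset.mem_Icc.mp hj).1
    simp [zero_pow (by omega : j ≠ 0)]
  rw [weierstrassFactor, Finset.sum_eq_zero h]
  simp

lemma hasDerivAt_wf (p : ℕ) (hp : 1 ≤ p) (w : ℂ) :
    HasDerivAt (weierstrassFactor p)
      ((-w) ^ (p - 1) * Complex.exp (∑ j ∈ Finset.Icc 1 (p - 1), (-w) ^ j / (j : ℂ))) w := by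
  have hterm : ∀ j ∈ Finset.Icc 1 (p - 1),
      HasDerivAt (fun w : ℂ => (-w) ^ j / (j : ℂ)) (-(-w) ^ (j - 1)) w := by
    intro j hj
    have h1 : 1 ≤ j := (Finset.mem_Icc.mp hj).1
    have hjne : (j : ℂ) ≠ 0 := Nat.cast_ne_zero.mpr (by omega)
    have hneg : HasDerivAt (fun w : ℂ => -w) (-1) w := (hasDerivAt_id w).neg
    have h2 := (hneg.pow j).div_const (j : ℂ)
    convert h2 using 1
    · rfl
    · rfl
    · rfl
    field_simp
  have hg : HasDerivAt (fun w : ℂ => ∑ j ∈ Finset.Icc 1 (p - 1), (-w) ^ j / (j : ℂ))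
      (∑ j ∈ Finset.Icc 1 (p - 1), -(-w) ^ (j - 1)) w := HasDerivAt.fun_sum hterm
  have h1w : HasDerivAt (fun w : ℂ => 1 + w) 1 w := by
    simpa using (hasDerivAt_id w).const_add (1 : ℂ)
  have hmain := h1w.mul hg.cexp
  have hfun : weierstrassFactor p = fun w : ℂ =>
      (1 + w) * Complex.exp (∑ j ∈ Finset.Icc 1 (p - 1), (-w) ^ j / (j : ℂ)) := rfl
  rw [hfun]
  convert hmain using 1
  · rfl
  · rfl
  · rfl
  have hIcc : Finset.Icc 1 (p - 1) = Finset.Ico 1 p := by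
    rw [← Finset.Ico_add_one_right_eq_Icc]
    congr 1
    omega
  have hsum : (∑ j ∈ Finset.Icc 1 (p - 1), -(-w : ℂ) ^ (j - 1))
      = -∑ k ∈ Finset.range (p - 1), (-w) ^ k := by
    rw [hIcc, Finset.sum_Ico_eq_sum_range, ← Finset.sum_neg_distrib]
    exact Finset.sum_congr rfl fun i _ => by simp
  rw [hsum]
  have hgeo := geom_sum_mul (-w) (p - 1)
  have hppred : ((-w) ^ (p - 1) : ℂ) = (-w) ^ (p - 1) := rfl
  linear_combination (-(Complex.exp (∑ j ∈ Finset.Icc 1 (p - 1), (-w) ^ j / (j : ℂ)))) * hgeo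

lemma norm_exp_sum_le (p : ℕ) {R : ℝ} {ζ : ℂ} (hζ : ‖ζ‖ ≤ R) :
    ‖Complex.exp (∑ j ∈ Finset.Icc 1 (p - 1), (-ζ) ^ j / (j : ℂ))‖
      ≤ Real.exp (∑ j ∈ Finset.Icc 1 (p - 1), R ^ j) := by
  have hR : (0:ℝ) ≤ R := le_trans (norm_nonneg ζ) hζ
  set z := ∑ j ∈ Finset.Icc 1 (p - 1), (-ζ) ^ j / (j : ℂ)
  have h1 : ‖Complex.exp z‖ ≤ Real.exp ‖z‖ := by
    rw [Complex.norm_exp]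
    exact Real.exp_le_exp.mpr (Complex.re_le_norm z)
  refine h1.trans (Real.exp_le_exp.mpr ?_)
  refine (norm_sum_le _ _).trans (Finset.sum_le_sum fun j hj => ?_)
  have hj1 : 1 ≤ j := (Finset.mem_Icc.mp hj).1
  have : ‖(-ζ : ℂ) ^ j / (j : ℂ)‖ = ‖ζ‖ ^ j / (j : ℝ) := by
    rw [norm_div, norm_pow, norm_neg]
    simp
  rw [this]
  calc ‖ζ‖ ^ j / (j : ℝ) ≤ ‖ζ‖ ^ j / 1 := by
        apply div_le_div_of_nonneg_left (by positivity) one_pos ?_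
        exact_mod_cast hj1
    _ = ‖ζ‖ ^ j := div_one _
    _ ≤ R ^ j := pow_le_pow_left₀ (norm_nonneg _) hζ j

lemma norm_wf_sub_le (p : ℕ) (hp : 1 ≤ p) {R r : ℝ} (hrR : r ≤ R) {w w' : ℂ}
    (hw : ‖w‖ ≤ r) (hw' : ‖w'‖ ≤ r) :
    ‖weierstrassFactor p w - weierstrassFactor p w'‖
      ≤ r ^ (p - 1) * Real.exp (∑ j ∈ Finset.Icc 1 (p - 1), R ^ j) * ‖w - w'‖ := by
  have hr : (0:ℝ) ≤ r := le_trans (norm_nonneg w) hw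
  set s : Set ℂ := Metric.closedBall 0 r
  set D : ℂ → ℂ := fun x => (-x) ^ (p - 1) *
    Complex.exp (∑ j ∈ Finset.Icc 1 (p - 1), (-x) ^ j / (j : ℂ)) with hD
  have hder : ∀ x ∈ s, HasFDerivWithinAt (weierstrassFactor p)
      (ContinuousLinearMap.smulRight (1 : ℂ →L[ℂ] ℂ) (D x)) s x := fun x _ =>
    (hasDerivAt_wf p hp x).hasFDerivAt.hasFDerivWithinAt
  have hbound : ∀ x ∈ s, ‖ContinuousLinearMap.smulRight (1 : ℂ →L[ℂ] ℂ) (D x)‖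
      ≤ r ^ (p - 1) * Real.exp (∑ j ∈ Finset.Icc 1 (p - 1), R ^ j) := by
    intro x hx
    have hxr : ‖x‖ ≤ r := by simpa [s, Metric.mem_closedBall, dist_zero_right] using hx
    rw [ContinuousLinearMap.norm_smulRight_apply, norm_one, one_mul, hD, norm_mul, norm_pow,
      norm_neg]
    exact mul_le_mul (pow_le_pow_left₀ (norm_nonneg x) hxr _)
      (norm_exp_sum_le p (hxr.trans hrR)) (norm_nonneg _) (by positivity)
  have hws : w ∈ s := by simpa [s, Metric.mem_closedBall, dist_zero_right] using hw
  have hw's : w' ∈ s := by simpa [s, Metric.mem_closedBall, dist_zero_right] using hw'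
  exact (convex_closedBall (0:ℂ) r).norm_image_sub_le_of_norm_hasFDerivWithin_le
    hder hbound hw's hws

lemma norm_wf_sub_one_le (p : ℕ) (hp : 1 ≤ p) {R : ℝ} {w : ℂ} (hw : ‖w‖ ≤ R) :
    ‖weierstrassFactor p w - 1‖
      ≤ Real.exp (∑ j ∈ Finset.Icc 1 (p - 1), R ^ j) * ‖w‖ ^ p := by
  have h := norm_wf_sub_le p hp hw (le_refl ‖w‖) (by simp : ‖(0:ℂ)‖ ≤ ‖w‖) (w := w) (w' := 0)
  rw [wf_zero, sub_zero] at h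
  calc ‖weierstrassFactor p w - 1‖
      ≤ ‖w‖ ^ (p - 1) * Real.exp (∑ j ∈ Finset.Icc 1 (p - 1), R ^ j) * ‖w‖ := h
    _ = Real.exp (∑ j ∈ Finset.Icc 1 (p - 1), R ^ j) * (‖w‖ ^ (p - 1) * ‖w‖) := by ring
    _ = Real.exp (∑ j ∈ Finset.Icc 1 (p - 1), R ^ j) * ‖w‖ ^ p := by
        rw [← pow_succ, Nat.sub_add_cancel hp]



lemma norm_le_exp_of_sub_one {x : ℂ} {t : ℝ} (h : ‖x - 1‖ ≤ t) : ‖x‖ ≤ Real.exp t := by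
  calc ‖x‖ = ‖x - 1 + 1‖ := by ring_nf
    _ ≤ ‖x - 1‖ + 1 := by simpa using norm_add_le (x - 1) 1
    _ ≤ t + 1 := by linarith
    _ ≤ Real.exp t := by linarith [Real.add_one_le_exp t]

lemma norm_prod_le_exp {f : ℕ → ℂ} {c : ℕ → ℝ} {F : Finset ℕ}
    (h : ∀ n ∈ F, ‖f n‖ ≤ Real.exp (c n)) :
    ‖∏ n ∈ F, f n‖ ≤ Real.exp (∑ n ∈ F, c n) := by
  calc ‖∏ n ∈ F, f n‖ ≤ ∏ n ∈ F, ‖f n‖ := Finset.norm_prod_le F f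
    _ ≤ ∏ n ∈ F, Real.exp (c n) := Finset.prod_le_prod (fun n _ => norm_nonneg _) h
    _ = Real.exp (∑ n ∈ F, c n) := (Real.exp_sum F c).symm

lemma norm_prod_sub_one_le {f : ℕ → ℂ} {d : ℕ → ℝ} (hd0 : ∀ n, 0 ≤ d n)
    (F : Finset ℕ) (h : ∀ n ∈ F, ‖f n - 1‖ ≤ d n) :
    ‖(∏ n ∈ F, f n) - 1‖ ≤ Real.exp (∑ n ∈ F, d n) - 1 := by
  induction F using Finset.cons_induction with
  | empty => simp
  | cons a F ha ih =>
    rw [Finset.prod_cons, Finset.sum_cons]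
    have hha : ‖f a - 1‖ ≤ d a := h a (Finset.mem_cons_self a F)
    have hP : ‖(∏ n ∈ F, f n) - 1‖ ≤ Real.exp (∑ n ∈ F, d n) - 1 :=
      ih fun n hn => h n (Finset.mem_cons.mpr (Or.inr hn))
    have hfa : ‖f a‖ ≤ Real.exp (d a) := norm_le_exp_of_sub_one hha
    have hda : d a ≤ Real.exp (d a) - 1 := by linarith [Real.add_one_le_exp (d a)]
    have key : f a * ∏ n ∈ F, f n - 1 = f a * ((∏ n ∈ F, f n) - 1) + (f a - 1) := by ring
    rw [key]
    calc ‖f a * ((∏ n ∈ F, f n) - 1) + (f a - 1)‖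
        ≤ ‖f a‖ * ‖(∏ n ∈ F, f n) - 1‖ + ‖f a - 1‖ := by
          refine (norm_add_le _ _).trans ?_
          rw [norm_mul]
      _ ≤ Real.exp (d a) * (Real.exp (∑ n ∈ F, d n) - 1) + (Real.exp (d a) - 1) := by
          have h1 : (0:ℝ) ≤ Real.exp (d a) := (Real.exp_pos _).le
          have h2 : (0:ℝ) ≤ Real.exp (∑ n ∈ F, d n) - 1 := by
            have : (0:ℝ) ≤ ∑ n ∈ F, d n := Finset.sum_nonneg fun n _ => hd0 n
            linarith [Real.add_one_le_exp (∑ n ∈ F, d n)]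
          have := mul_le_mul hfa hP (norm_nonneg _) h1
          linarith [hha.trans hda]
      _ = Real.exp (d a) * Real.exp (∑ n ∈ F, d n) - 1 := by ring
      _ = Real.exp (d a + ∑ n ∈ F, d n) - 1 := by rw [Real.exp_add]

lemma norm_prod_sub_prod_le {f g : ℕ → ℂ} {c : ℕ → ℝ} (hc0 : ∀ n, 0 ≤ c n)
    (F : Finset ℕ) (hf : ∀ n ∈ F, ‖f n‖ ≤ Real.exp (c n))
    (hg : ∀ n ∈ F, ‖g n‖ ≤ Real.exp (c n)) :
    ‖(∏ n ∈ F, f n) - ∏ n ∈ F, g n‖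
      ≤ Real.exp (∑ n ∈ F, c n) * ∑ n ∈ F, ‖f n - g n‖ := by
  induction F using Finset.cons_induction with
  | empty => simp
  | cons a F ha ih =>
    rw [Finset.prod_cons, Finset.prod_cons, Finset.sum_cons, Finset.sum_cons]
    have hfF : ∀ n ∈ F, ‖f n‖ ≤ Real.exp (c n) := fun n hn => hf n (Finset.mem_cons.mpr (Or.inr hn))
    have hgF : ∀ n ∈ F, ‖g n‖ ≤ Real.exp (c n) := fun n hn => hg n (Finset.mem_cons.mpr (Or.inr hn))
    have hih := ih hfF hgF
    have key : f a * ∏ n ∈ F, f n - g a * ∏ n ∈ F, g n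
        = (f a - g a) * ∏ n ∈ F, f n + g a * ((∏ n ∈ F, f n) - ∏ n ∈ F, g n) := by ring
    rw [key]
    have hPf : ‖∏ n ∈ F, f n‖ ≤ Real.exp (∑ n ∈ F, c n) := norm_prod_le_exp hfF
    have hga : ‖g a‖ ≤ Real.exp (c a) := hg a (Finset.mem_cons_self a F)
    have e1 : (1:ℝ) ≤ Real.exp (c a) := Real.one_le_exp (hc0 a)
    have epos : (0:ℝ) < Real.exp (∑ n ∈ F, c n) := Real.exp_pos _
    calc ‖(f a - g a) * ∏ n ∈ F, f n + g a * ((∏ n ∈ F, f n) - ∏ n ∈ F, g n)‖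
        ≤ ‖f a - g a‖ * ‖∏ n ∈ F, f n‖ + ‖g a‖ * ‖(∏ n ∈ F, f n) - ∏ n ∈ F, g n‖ := by
          refine (norm_add_le _ _).trans ?_
          rw [norm_mul, norm_mul]
      _ ≤ ‖f a - g a‖ * Real.exp (∑ n ∈ F, c n)
          + Real.exp (c a) * (Real.exp (∑ n ∈ F, c n) * ∑ n ∈ F, ‖f n - g n‖) := by
          gcongr <;> first | exact hPf | exact hga | exact hih | positivity
      _ ≤ Real.exp (c a + ∑ n ∈ F, c n) * (‖f a - g a‖ + ∑ n ∈ F, ‖f n - g n‖) := by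
          rw [Real.exp_add]
          have hs : (0:ℝ) ≤ ∑ n ∈ F, ‖f n - g n‖ :=
            Finset.sum_nonneg fun n _ => norm_nonneg _
          nlinarith [norm_nonneg (f a - g a), mul_nonneg (norm_nonneg (f a - g a)) epos.le]

lemma multipliable_of_bound {f : ℕ → ℂ} {d : ℕ → ℝ} (h : ∀ n, ‖f n - 1‖ ≤ d n)
    (hd : Summable d) (hd0 : ∀ n, 0 ≤ d n) : Multipliable f := by
  have hb : ∀ n, ‖f n‖ ≤ Real.exp (d n) := fun n => norm_le_exp_of_sub_one (h n)
  set D := ∑' n, d n with hD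
  have hcau : CauchySeq (fun s : Finset ℕ => ∏ i ∈ s, f i) := by
    rw [Metric.cauchySeq_iff']
    intro ε hε
    set δ := Real.log (1 + ε / 2 * Real.exp (-D)) with hδdef
    have hpos : (0:ℝ) < ε / 2 * Real.exp (-D) := by positivity
    have hδ : 0 < δ := Real.log_pos (by linarith)
    obtain ⟨s₀, hs₀⟩ := summable_iff_vanishing.mp hd (Set.Iio δ) (Iio_mem_nhds hδ)
    refine ⟨s₀, fun s hs => ?_⟩
    have hsub : s₀ ⊆ s := hs
    rw [dist_eq_norm, ← Finset.prod_sdiff hsub]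
    have hfac : (∏ i ∈ s \ s₀, f i) * (∏ i ∈ s₀, f i) - ∏ i ∈ s₀, f i
        = ((∏ i ∈ s \ s₀, f i) - 1) * ∏ i ∈ s₀, f i := by ring
    rw [hfac, norm_mul]
    have h1 : ‖(∏ i ∈ s \ s₀, f i) - 1‖ ≤ Real.exp (∑ i ∈ s \ s₀, d i) - 1 :=
      norm_prod_sub_one_le hd0 _ (fun n _ => h n)
    have h2 : ‖∏ i ∈ s₀, f i‖ ≤ Real.exp D := by
      refine (norm_prod_le_exp fun n _ => hb n).trans (Real.exp_le_exp.mpr ?_)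
      exact Summable.sum_le_tsum s₀ (fun i _ => hd0 i) hd
    have h3 : ∑ i ∈ s \ s₀, d i < δ := hs₀ _ Finset.sdiff_disjoint
    have h4 : Real.exp (∑ i ∈ s \ s₀, d i) - 1 ≤ Real.exp δ - 1 := by
      have := Real.exp_le_exp.mpr h3.le
      linarith
    have h5 : Real.exp δ = 1 + ε / 2 * Real.exp (-D) := Real.exp_log (by linarith)
    calc ‖(∏ i ∈ s \ s₀, f i) - 1‖ * ‖∏ i ∈ s₀, f i‖
        ≤ (Real.exp δ - 1) * Real.exp D := by
          refine mul_le_mul (h1.trans h4) h2 (norm_nonneg _) ?_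
          linarith [Real.one_le_exp hδ.le]
      _ = ε / 2 * (Real.exp (-D) * Real.exp D) := by rw [h5]; ring
      _ = ε / 2 := by rw [← Real.exp_add]; simp
      _ < ε := by linarith
  obtain ⟨a, ha⟩ := cauchySeq_tendsto_of_complete hcau
  exact ⟨a, ha⟩

lemma norm_tprod_sub_prod_le {f : ℕ → ℂ} {d : ℕ → ℝ} (h : ∀ n, ‖f n - 1‖ ≤ d n)
    (hd : Summable d) (hd0 : ∀ n, 0 ≤ d n) (N : ℕ) :
    ‖(∏' n, f n) - ∏ n ∈ Finset.range N, f n‖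
      ≤ Real.exp (∑' n, d n) * (Real.exp (∑' k, d (k + N)) - 1) := by
  have hm : Multipliable f := multipliable_of_bound h hd hd0
  have htd : Summable fun k => d (k + N) := (summable_nat_add_iff N).mpr hd
  have htd0 : (0:ℝ) ≤ ∑' k, d (k + N) := tsum_nonneg fun k => hd0 _
  refine le_of_tendsto ((hm.hasProd.tendsto_prod_nat.sub tendsto_const_nhds).norm) ?_
  filter_upwards [Filter.eventually_ge_atTop N] with K hK
  have hsplit : (∏ n ∈ Finset.range K, f n) - ∏ n ∈ Finset.range N, f n
      = (∏ n ∈ Finset.range N, f n) * ((∏ n ∈ Finset.Ico N K, f n) - 1) := by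
    rw [mul_sub, mul_one, Finset.prod_range_mul_prod_Ico f hK]
  rw [hsplit, norm_mul]
  have hA : ‖∏ n ∈ Finset.range N, f n‖ ≤ Real.exp (∑' n, d n) := by
    refine (norm_prod_le_exp fun n _ => norm_le_exp_of_sub_one (h n)).trans
      (Real.exp_le_exp.mpr ?_)
    exact Summable.sum_le_tsum _ (fun i _ => hd0 i) hd
  have hB : ‖(∏ n ∈ Finset.Ico N K, f n) - 1‖ ≤ Real.exp (∑' k, d (k + N)) - 1 := by
    refine (norm_prod_sub_one_le hd0 _ fun n _ => h n).trans ?_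
    have : ∑ n ∈ Finset.Ico N K, d n ≤ ∑' k, d (k + N) := by
      rw [Finset.sum_Ico_eq_sum_range]
      calc ∑ i ∈ Finset.range (K - N), d (N + i)
          = ∑ i ∈ Finset.range (K - N), d (i + N) :=
            Finset.sum_congr rfl fun i _ => by rw [add_comm]
        _ ≤ ∑' k, d (k + N) := Summable.sum_le_tsum _ (fun i _ => hd0 _) htd
    have := Real.exp_le_exp.mpr this
    linarith
  exact mul_le_mul hA hB (norm_nonneg _) (Real.exp_pos _).le

end StmtSixAux

open StmtSixAux

/-- Let `p ≥ 1`, let `(λ n)` satisfy `∑ ‖λ n‖^p < ∞`, and for each `N` let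
`λ_{0,N}, …, λ_{N-1,N}` be the eigenvalues of an `N`-dimensional approximation.
If the `p`-th power sums of the approximate eigenvalues are uniformly bounded and
`∑_{n<N} ‖λ_{n,N} - λ n‖ → 0`, then the approximate `p`-modified determinants
`∏_{n<N} E_p(z λ_{n,N})` converge to `∏' n, E_p(z λ n)` uniformly on every
bounded set `{‖z‖ ≤ M}`. -/
theorem stmt_6 (p : ℕ) (hp : 1 ≤ p) (lam : ℕ → ℂ)
    (hlam : Summable fun n => ‖lam n‖ ^ p) (lamN : ℕ → ℕ → ℂ)
    (hbdd : ∃ C : ℝ, ∀ N, 1 ≤ N → ∑ n ∈ Finset.range N, ‖lamN N n‖ ^ p ≤ C)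
    (happrox : Filter.Tendsto (fun N => ∑ n ∈ Finset.range N, ‖lamN N n - lam n‖)
      Filter.atTop (nhds 0)) (M : ℝ) (hM : 0 < M) :
    TendstoUniformlyOn
      (fun N z => ∏ n ∈ Finset.range N, weierstrassFactor p (z * lamN N n))
      (fun z => ∏' n, weierstrassFactor p (z * lam n))
      Filter.atTop (Metric.closedBall (0 : ℂ) M) := by
  obtain ⟨C, hC⟩ := hbdd
  set S : ℝ := ∑' n, ‖lam n‖ ^ p with hSdef
  have hS0 : 0 ≤ S := tsum_nonneg fun n => by positivity
  set C' : ℝ := max C 0 with hC'def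
  have hC'0 : 0 ≤ C' := le_max_right _ _
  set Rl : ℝ := max 1 (max S C') with hRldef
  have hRl1 : (1:ℝ) ≤ Rl := le_max_left _ _
  set R : ℝ := M * Rl with hRdef
  have hR0 : 0 ≤ R := by positivity
  set K : ℝ := Real.exp (∑ j ∈ Finset.Icc 1 (p - 1), R ^ j) with hKdef
  have hK1 : (1:ℝ) ≤ K := Real.one_le_exp (Finset.sum_nonneg fun j _ => by positivity)
  have hK0 : (0:ℝ) < K := lt_of_lt_of_le one_pos hK1
  set L : ℝ := R ^ (p - 1) * K with hLdef
  have hL0 : 0 ≤ L := by positivity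
  set KM : ℝ := K * M ^ p with hKMdef
  have hKM0 : 0 ≤ KM := by positivity
  -- eigenvalue norm bounds
  have hlam_le : ∀ n, ‖lam n‖ ^ p ≤ S := fun n =>
    Summable.le_tsum hlam n fun m _ => by positivity
  have hlamR : ∀ n, ‖lam n‖ ≤ Rl := by
    intro n
    rcases le_or_gt ‖lam n‖ 1 with h | h
    · exact h.trans hRl1
    · calc ‖lam n‖ ≤ ‖lam n‖ ^ p := le_self_pow₀ h.le (by omega)
        _ ≤ S := hlam_le n
        _ ≤ Rl := le_trans (le_max_left _ _) (le_max_right _ _)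
  have hlamNR : ∀ N, 1 ≤ N → ∀ n < N, ‖lamN N n‖ ≤ Rl := by
    intro N hN n hn
    have hsum : ‖lamN N n‖ ^ p ≤ C := by
      refine le_trans ?_ (hC N hN)
      exact Finset.single_le_sum (f := fun i => ‖lamN N i‖ ^ p) (fun i _ => by positivity)
        (Finset.mem_range.mpr hn)
    rcases le_or_gt ‖lamN N n‖ 1 with h | h
    · exact h.trans hRl1
    · calc ‖lamN N n‖ ≤ ‖lamN N n‖ ^ p := le_self_pow₀ h.le (by omega)
        _ ≤ C' := hsum.trans (le_max_left _ _)
        _ ≤ Rl := le_trans (le_max_right _ _) (le_max_right _ _)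
  -- the uniform error bound
  set dE : ℕ → ℝ := fun n => KM * ‖lam n‖ ^ p with hdEdef
  have hdE0 : ∀ n, 0 ≤ dE n := fun n => by positivity
  have hdES : Summable dE := hlam.mul_left KM
  have htsum_dE : ∑' n, dE n = KM * S := tsum_mul_left
  set tail : ℕ → ℝ := fun N => ∑' k, dE (k + N) with htaildef
  set G : ℕ → ℝ := fun N => Real.exp (KM * (S + C')) *
      (L * M * ∑ n ∈ Finset.range N, ‖lamN N n - lam n‖)
    + Real.exp (KM * S) * (Real.exp (tail N) - 1) with hGdef
  have hGtend : Filter.Tendsto G Filter.atTop (nhds 0) := by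
    have htail : Filter.Tendsto tail Filter.atTop (nhds 0) := tendsto_sum_nat_add dE
    have h1 : Filter.Tendsto (fun N => Real.exp (KM * (S + C')) *
        (L * M * ∑ n ∈ Finset.range N, ‖lamN N n - lam n‖)) Filter.atTop
        (nhds (Real.exp (KM * (S + C')) * (L * M * 0))) :=
      (happrox.const_mul (L * M)).const_mul _
    have h2 : Filter.Tendsto (fun N => Real.exp (KM * S) * (Real.exp (tail N) - 1))
        Filter.atTop (nhds (Real.exp (KM * S) * (Real.exp 0 - 1))) :=
      (((Real.continuous_exp.tendsto 0).comp htail).sub tendsto_const_nhds).const_mul _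
    have := h1.add h2
    simpa using this
  -- the pointwise estimate
  have hmain : ∀ N, 1 ≤ N → ∀ z ∈ Metric.closedBall (0:ℂ) M,
      dist ((fun z => ∏' n, weierstrassFactor p (z * lam n)) z)
        ((fun N z => ∏ n ∈ Finset.range N, weierstrassFactor p (z * lamN N n)) N z) ≤ G N := by
    intro N hN z hz
    have hzM : ‖z‖ ≤ M := by simpa [Metric.mem_closedBall, dist_zero_right] using hz
    have hz0 : 0 ≤ ‖z‖ := norm_nonneg z
    set b : ℕ → ℂ := fun n => weierstrassFactor p (z * lam n) with hbdef
    set a : ℕ → ℂ := fun n => weierstrassFactor p (z * lamN N n) with hadef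
    have hwb : ∀ n, ‖z * lam n‖ ≤ R := by
      intro n
      rw [norm_mul]
      exact mul_le_mul hzM (hlamR n) (norm_nonneg _) hM.le
    have hwa : ∀ n, n < N → ‖z * lamN N n‖ ≤ R := by
      intro n hn
      rw [norm_mul]
      exact mul_le_mul hzM (hlamNR N hN n hn) (norm_nonneg _) hM.le
    have hpow : ∀ w : ℂ, ‖z * w‖ ^ p ≤ M ^ p * ‖w‖ ^ p := by
      intro w
      rw [norm_mul, mul_pow]
      exact mul_le_mul_of_nonneg_right (pow_le_pow_left₀ hz0 hzM p) (by positivity)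
    have hb1 : ∀ n, ‖b n - 1‖ ≤ dE n := by
      intro n
      refine (norm_wf_sub_one_le p hp (hwb n)).trans ?_
      calc K * ‖z * lam n‖ ^ p ≤ K * (M ^ p * ‖lam n‖ ^ p) :=
            mul_le_mul_of_nonneg_left (hpow _) hK0.le
        _ = dE n := by rw [hdEdef, hKMdef]; ring
    have ha1 : ∀ n, n < N → ‖a n - 1‖ ≤ KM * ‖lamN N n‖ ^ p := by
      intro n hn
      refine (norm_wf_sub_one_le p hp (hwa n hn)).trans ?_
      calc K * ‖z * lamN N n‖ ^ p ≤ K * (M ^ p * ‖lamN N n‖ ^ p) :=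
            mul_le_mul_of_nonneg_left (hpow _) hK0.le
        _ = KM * ‖lamN N n‖ ^ p := by rw [hKMdef]; ring
    set ca : ℕ → ℝ := fun n => dE n + KM * ‖lamN N n‖ ^ p with hcadef
    have hca0 : ∀ n, 0 ≤ ca n := fun n => by positivity
    have hbexp : ∀ n ∈ Finset.range N, ‖b n‖ ≤ Real.exp (ca n) := by
      intro n _
      refine (norm_le_exp_of_sub_one (hb1 n)).trans (Real.exp_le_exp.mpr ?_)
      simp only [hcadef]
      exact le_add_of_nonneg_right (mul_nonneg hKM0 (by positivity))
    have haexp : ∀ n ∈ Finset.range N, ‖a n‖ ≤ Real.exp (ca n) := by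
      intro n hn
      refine (norm_le_exp_of_sub_one (ha1 n (Finset.mem_range.mp hn))).trans
        (Real.exp_le_exp.mpr ?_)
      simp only [hcadef]
      exact le_add_of_nonneg_left (hdE0 n)
    -- term 1 : tail of the infinite product
    have hT1 : ‖(∏' n, b n) - ∏ n ∈ Finset.range N, b n‖
        ≤ Real.exp (KM * S) * (Real.exp (tail N) - 1) := by
      have := norm_tprod_sub_prod_le hb1 hdES hdE0 N
      rwa [htsum_dE] at this
    -- term 2 : comparison of the finite products
    have hT2 : ‖(∏ n ∈ Finset.range N, b n) - ∏ n ∈ Finset.range N, a n‖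
        ≤ Real.exp (KM * (S + C')) *
          (L * M * ∑ n ∈ Finset.range N, ‖lamN N n - lam n‖) := by
      have hstep := norm_prod_sub_prod_le hca0 (Finset.range N) hbexp haexp
      have hca_sum : ∑ n ∈ Finset.range N, ca n ≤ KM * (S + C') := by
        rw [hcadef]
        rw [Finset.sum_add_distrib]
        have e1 : ∑ n ∈ Finset.range N, dE n ≤ KM * S := by
          rw [hdEdef, ← Finset.mul_sum]
          exact mul_le_mul_of_nonneg_left
            (Summable.sum_le_tsum _ (fun i _ => by positivity) hlam) hKM0
        have e2 : ∑ n ∈ Finset.range N, KM * ‖lamN N n‖ ^ p ≤ KM * C' := by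
          rw [← Finset.mul_sum]
          exact mul_le_mul_of_nonneg_left ((hC N hN).trans (le_max_left _ _)) hKM0
        linarith [e1, e2]
      have hdiff : ∀ n ∈ Finset.range N, ‖b n - a n‖ ≤ L * M * ‖lamN N n - lam n‖ := by
        intro n hn
        have hn' := Finset.mem_range.mp hn
        have := norm_wf_sub_le p hp (le_refl R) (hwb n) (hwa n hn')
        refine this.trans ?_
        rw [← hLdef]
        have : ‖z * lam n - z * lamN N n‖ = ‖z‖ * ‖lam n - lamN N n‖ := by
          rw [← mul_sub, norm_mul]
        rw [this, norm_sub_rev]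
        calc L * (‖z‖ * ‖lamN N n - lam n‖) ≤ L * (M * ‖lamN N n - lam n‖) := by
              refine mul_le_mul_of_nonneg_left ?_ hL0
              exact mul_le_mul_of_nonneg_right hzM (norm_nonneg _)
          _ = L * M * ‖lamN N n - lam n‖ := by ring
      have hsum_diff : ∑ n ∈ Finset.range N, ‖b n - a n‖
          ≤ L * M * ∑ n ∈ Finset.range N, ‖lamN N n - lam n‖ := by
        rw [Finset.mul_sum]
        exact Finset.sum_le_sum hdiff
      calc ‖(∏ n ∈ Finset.range N, b n) - ∏ n ∈ Finset.range N, a n‖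
          ≤ Real.exp (∑ n ∈ Finset.range N, ca n) * ∑ n ∈ Finset.range N, ‖b n - a n‖ :=
            hstep
        _ ≤ Real.exp (KM * (S + C')) *
            (L * M * ∑ n ∈ Finset.range N, ‖lamN N n - lam n‖) :=
            mul_le_mul (Real.exp_le_exp.mpr hca_sum) hsum_diff
              (Finset.sum_nonneg fun n _ => norm_nonneg _) (Real.exp_pos _).le
    -- combine
    rw [dist_eq_norm]
    calc ‖(∏' n, b n) - ∏ n ∈ Finset.range N, a n‖
        ≤ ‖(∏' n, b n) - ∏ n ∈ Finset.range N, b n‖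
          + ‖(∏ n ∈ Finset.range N, b n) - ∏ n ∈ Finset.range N, a n‖ := by
          simpa using norm_add_le ((∏' n, b n) - ∏ n ∈ Finset.range N, b n)
            ((∏ n ∈ Finset.range N, b n) - ∏ n ∈ Finset.range N, a n)
      _ ≤ Real.exp (KM * S) * (Real.exp (tail N) - 1)
          + Real.exp (KM * (S + C')) *
            (L * M * ∑ n ∈ Finset.range N, ‖lamN N n - lam n‖) := add_le_add hT1 hT2
      _ = G N := by rw [hGdef]; ring
  -- conclude
  rw [Metric.tendstoUniformlyOn_iff]
  intro ε hε
  filter_upwards [hGtend.eventually_lt_const hε, Filter.eventually_ge_atTop 1] with N h1 h2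
  intro z hz
  exact lt_of_le_of_lt (hmain N h2 z hz) h1
end

section
/- Let a < b be real numbers and let k : [a,b] × [a,b] → ℂ be such that: for every x ∈ [a,b] the function k_x := k(x,·) is integrable on [a,b]; sup_{x∈[a,b]} ‖k_x‖_{L¹} < ∞; and ‖k_{x₁} − k_{x₂}‖_{L¹} → 0 as x₁ → x₂ for all x₁, x₂ ∈ [a,b]. Then for every measurable function u : [a,b] → ℂ with |u(y)| ≤ 1 for almost every y, the function Ku(x) = ∫_a^b k(x,y)·u(y) dy satisfies: (i) |Ku(x)| ≤ sup_{x∈[a,b]} ‖k_x‖_{L¹} for all x ∈ [a,b]; (ii) |Ku(x₁) − Ku(x₂)| ≤ ‖k_{x₁} − k_{x₂}‖_{L¹} for all x₁, x₂ ∈ [a,b]; and (iii) Ku is continuous on [a,b]. -/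
open MeasureTheory

/-- Let `k` be a kernel on `[a,b]²` such that every slice `k x = k(x,·)` is
integrable, the `L¹` norms of the slices are uniformly bounded, and
`x ↦ k x` is continuous from `[a,b]` into `L¹[a,b]` (Hypothesis 1 of the paper).
Then for any measurable `u` with `‖u‖ ≤ 1` a.e. on `[a,b]`, the function
`Ku(x) = ∫_a^b k(x,y)u(y) dy` is bounded by `sup_x ‖k_x‖_{L¹}`, satisfies
`|Ku(x₁) - Ku(x₂)| ≤ ‖k_{x₁} - k_{x₂}‖_{L¹}`, and is continuous on `[a,b]`. -/
theorem stmt_9 (a b : ℝ) (hab : a < b) (k : ℝ → ℝ → ℂ)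
    (hint : ∀ x ∈ Set.Icc a b, IntegrableOn (k x) (Set.Icc a b))
    (hbdd : BddAbove (Set.range fun x : Set.Icc a b => ∫ y in Set.Icc a b, ‖k x y‖))
    (hcont : ∀ x₂ ∈ Set.Icc a b,
      Filter.Tendsto (fun x₁ => ∫ y in Set.Icc a b, ‖k x₁ y - k x₂ y‖)
        (nhdsWithin x₂ (Set.Icc a b)) (nhds 0))
    (u : ℝ → ℂ) (hu : Measurable u)
    (hu1 : ∀ᵐ y ∂(volume.restrict (Set.Icc a b)), ‖u y‖ ≤ 1) :
    (∀ x ∈ Set.Icc a b, ‖∫ y in Set.Icc a b, k x y * u y‖ ≤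
      ⨆ x : Set.Icc a b, ∫ y in Set.Icc a b, ‖k x y‖) ∧
    (∀ x₁ ∈ Set.Icc a b, ∀ x₂ ∈ Set.Icc a b,
      ‖(∫ y in Set.Icc a b, k x₁ y * u y) - ∫ y in Set.Icc a b, k x₂ y * u y‖ ≤
        ∫ y in Set.Icc a b, ‖k x₁ y - k x₂ y‖) ∧
    ContinuousOn (fun x => ∫ y in Set.Icc a b, k x y * u y) (Set.Icc a b) := by

  have key : ∀ f : ℝ → ℂ, IntegrableOn f (Set.Icc a b) →
      ‖∫ y in Set.Icc a b, f y * u y‖ ≤ ∫ y in Set.Icc a b, ‖f y‖ := by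
    intro f hf
    calc ‖∫ y in Set.Icc a b, f y * u y‖ ≤ ∫ y in Set.Icc a b, ‖f y * u y‖ :=
          norm_integral_le_integral_norm _
      _ ≤ ∫ y in Set.Icc a b, ‖f y‖ := by
          apply integral_mono_of_nonneg
          · filter_upwards with y using norm_nonneg _
          · exact hf.norm
          · filter_upwards [hu1] with y hy
            calc ‖f y * u y‖ = ‖f y‖ * ‖u y‖ := norm_mul _ _
              _ ≤ ‖f y‖ * 1 := by
                  exact mul_le_mul_of_nonneg_left hy (norm_nonneg _)
              _ = ‖f y‖ := mul_one _
  have hintmul : ∀ x ∈ Set.Icc a b, IntegrableOn (fun y => k x y * u y) (Set.Icc a b) := by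
    intro x hx
    have := (hint x hx).bdd_mul (c := 1) hu.aestronglyMeasurable.restrict hu1
    exact (by simpa [mul_comm] using this : Integrable (fun y => k x y * u y) _)
  have h2 : ∀ x₁ ∈ Set.Icc a b, ∀ x₂ ∈ Set.Icc a b,
      ‖(∫ y in Set.Icc a b, k x₁ y * u y) - ∫ y in Set.Icc a b, k x₂ y * u y‖ ≤
        ∫ y in Set.Icc a b, ‖k x₁ y - k x₂ y‖ := by
    intro x₁ hx₁ x₂ hx₂
    rw [← integral_sub (hintmul x₁ hx₁) (hintmul x₂ hx₂)]
    have := key (fun y => k x₁ y - k x₂ y) ((hint x₁ hx₁).sub (hint x₂ hx₂))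
    simpa [sub_mul] using this
  refine ⟨?_, h2, ?_⟩
  · intro x hx
    refine (key (k x) (hint x hx)).trans ?_
    exact le_ciSup hbdd (⟨x, hx⟩ : Set.Icc a b)
  · intro x₂ hx₂
    rw [ContinuousWithinAt, tendsto_iff_norm_sub_tendsto_zero]
    apply squeeze_zero' (Filter.Eventually.of_forall fun _ => norm_nonneg _)
    · filter_upwards [self_mem_nhdsWithin] with x₁ hx₁
      exact h2 x₁ hx₁ x₂ hx₂
    · exact hcont x₂ hx₂
end

section
/- Let a < b be real numbers and let k : [a,b] × [a,b] → ℂ be such that: for every x ∈ [a,b] the function k_x := k(x,·) is integrable on [a,b]; sup_{x∈[a,b]} ‖k_x‖_{L¹} < ∞; and ‖k_{x₁} − k_{x₂}‖_{L¹} → 0 as x₁ → x₂ for all x₁, x₂ ∈ [a,b]. Then the linear map K on C([a,b], ℂ) defined by (Ku)(x) = ∫_a^b k(x,y)·u(y) dy is a well-defined bounded linear operator from C([a,b], ℂ) (with the supremum norm) to itself, and K is a compact operator (the image of the closed unit ball of C([a,b], ℂ) is relatively compact). -/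
open MeasureTheory

attribute [local instance] MeasureTheory.Measure.Subtype.measureSpace

/-- Under Hypothesis 1 of the paper (each slice `k(x,·)` integrable, uniformly
bounded slice `L¹` norms, and `x ↦ k(x,·)` continuous into `L¹`), the formula
`(Ku)(x) = ∫_a^b k(x,y)u(y) dy` defines a bounded linear operator `K` on
`C([a,b], ℂ)` with the sup norm, and `K` is compact: the image of the closed
unit ball has compact closure. -/
theorem stmt_10 (a b : ℝ) (hab : a < b) (k : ℝ → ℝ → ℂ)
    (hint : ∀ x ∈ Set.Icc a b, IntegrableOn (k x) (Set.Icc a b))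
    (hbdd : BddAbove (Set.range fun x : Set.Icc a b => ∫ y in Set.Icc a b, ‖k x y‖))
    (hcont : ∀ x₂ ∈ Set.Icc a b,
      Filter.Tendsto (fun x₁ => ∫ y in Set.Icc a b, ‖k x₁ y - k x₂ y‖)
        (nhdsWithin x₂ (Set.Icc a b)) (nhds 0)) :
    ∃ K : C(Set.Icc a b, ℂ) →L[ℂ] C(Set.Icc a b, ℂ),
      (∀ u : C(Set.Icc a b, ℂ), ∀ x : Set.Icc a b,
        K u x = ∫ y : Set.Icc a b, k x y * u y) ∧
      IsCompact (closure (⇑K '' Metric.closedBall 0 1)) := by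
  classical
  set M : ℝ := sSup (Set.range fun x : Set.Icc a b => ∫ y in Set.Icc a b, ‖k x y‖) with hMdef
  have hMle : ∀ x : Set.Icc a b, ∫ y in Set.Icc a b, ‖k x y‖ ≤ M :=
    fun x => le_csSup hbdd ⟨x, rfl⟩
  have hM0 : 0 ≤ M :=
    le_trans (integral_nonneg fun y => norm_nonneg _) (hMle ⟨a, le_refl a, hab.le⟩)
  -- extension of a continuous map on `Icc a b` to `ℝ`
  set v : C(Set.Icc a b, ℂ) → ℝ → ℂ := fun u => Set.IccExtend hab.le u with hvdef
  have hvcont : ∀ u, Continuous (v u) := fun u => u.continuous.Icc_extend'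
  have hvb : ∀ u y, ‖v u y‖ ≤ ‖u‖ := fun u y => u.norm_coe_le_norm _
  have hvint : ∀ (u : C(Set.Icc a b, ℂ)) (x : ℝ), x ∈ Set.Icc a b →
      IntegrableOn (fun y => k x y * v u y) (Set.Icc a b) := by
    intro u x hx
    have h := Integrable.bdd_mul (hint x hx) ((hvcont u).aestronglyMeasurable.restrict)
      (Filter.Eventually.of_forall fun y => hvb u y)
    simpa [mul_comm, IntegrableOn] using h
  set G : C(Set.Icc a b, ℂ) → ℝ → ℂ :=
    fun u x => ∫ y in Set.Icc a b, k x y * v u y with hGdef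
  -- key estimate
  have key : ∀ (u : C(Set.Icc a b, ℂ)) (x₁ x₂ : ℝ), x₁ ∈ Set.Icc a b → x₂ ∈ Set.Icc a b →
      ‖G u x₁ - G u x₂‖ ≤ ‖u‖ * ∫ y in Set.Icc a b, ‖k x₁ y - k x₂ y‖ := by
    intro u x₁ x₂ h₁ h₂
    have hsub : G u x₁ - G u x₂ = ∫ y in Set.Icc a b, (k x₁ y - k x₂ y) * v u y := by
      rw [hGdef]
      rw [← integral_sub (hvint u x₁ h₁) (hvint u x₂ h₂)]
      congr 1
      ext y
      ring
    rw [hsub]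
    calc ‖∫ y in Set.Icc a b, (k x₁ y - k x₂ y) * v u y‖
        ≤ ∫ y in Set.Icc a b, ‖(k x₁ y - k x₂ y) * v u y‖ :=
          norm_integral_le_integral_norm _
      _ ≤ ∫ y in Set.Icc a b, ‖u‖ * ‖k x₁ y - k x₂ y‖ := by
          apply integral_mono_of_nonneg
          · exact Filter.Eventually.of_forall fun y => norm_nonneg _
          · exact (((hint x₁ h₁).sub (hint x₂ h₂)).norm.const_mul ‖u‖)
          · refine Filter.Eventually.of_forall fun y => ?_
            simp only [norm_mul]
            rw [mul_comm]
            exact mul_le_mul_of_nonneg_right (hvb u y) (norm_nonneg _)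
      _ = ‖u‖ * ∫ y in Set.Icc a b, ‖k x₁ y - k x₂ y‖ := by
          rw [integral_const_mul]
  -- continuity of `G u` on `Icc a b`
  have hGcont : ∀ u, ContinuousOn (G u) (Set.Icc a b) := by
    intro u x₂ h₂
    have h0 : Filter.Tendsto (fun x₁ => ‖G u x₁ - G u x₂‖)
        (nhdsWithin x₂ (Set.Icc a b)) (nhds 0) := by
      apply squeeze_zero' (Filter.Eventually.of_forall fun _ => norm_nonneg _)
      · filter_upwards [self_mem_nhdsWithin] with x₁ h₁
        exact key u x₁ x₂ h₁ h₂
      · have := (hcont x₂ h₂).const_mul ‖u‖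
        simpa using this
    have : Filter.Tendsto (G u) (nhdsWithin x₂ (Set.Icc a b)) (nhds (G u x₂)) :=
      tendsto_iff_norm_sub_tendsto_zero.2 h0
    exact this
  -- the pointwise bound
  have hbound : ∀ (u : C(Set.Icc a b, ℂ)) (x : ℝ), x ∈ Set.Icc a b →
      ‖G u x‖ ≤ M * ‖u‖ := by
    intro u x hx
    calc ‖G u x‖ ≤ ∫ y in Set.Icc a b, ‖k x y * v u y‖ :=
          norm_integral_le_integral_norm _
      _ ≤ ∫ y in Set.Icc a b, ‖k x y‖ * ‖u‖ := by
          apply integral_mono_of_nonneg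
          · exact Filter.Eventually.of_forall fun y => norm_nonneg _
          · exact ((hint x hx).norm.mul_const ‖u‖)
          · refine Filter.Eventually.of_forall fun y => ?_
            simp only [norm_mul]
            exact mul_le_mul_of_nonneg_left (hvb u y) (norm_nonneg _)
      _ = (∫ y in Set.Icc a b, ‖k x y‖) * ‖u‖ := by rw [integral_mul_const]
      _ ≤ M * ‖u‖ :=
          mul_le_mul_of_nonneg_right (hMle ⟨x, hx⟩) (norm_nonneg _)
  -- the linear map
  set L : C(Set.Icc a b, ℂ) →ₗ[ℂ] C(Set.Icc a b, ℂ) :=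
    { toFun := fun u => ContinuousMap.mk ((Set.Icc a b).restrict (G u)) (hGcont u).restrict
      map_add' := by
        intro u w
        ext x
        show G (u + w) x = G u x + G w x
        rw [hGdef]
        rw [← integral_add (hvint u x x.2) (hvint w x x.2)]
        refine integral_congr_ae (Filter.Eventually.of_forall fun y => ?_)
        show k x y * ((u + w) (Set.projIcc a b hab.le y)) = _
        simp [hvdef, Set.IccExtend, mul_add]
      map_smul' := by
        intro c u
        ext x
        show G (c • u) x = c • G u x
        rw [hGdef]
        rw [← integral_smul]
        refine integral_congr_ae (Filter.Eventually.of_forall fun y => ?_)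
        show k x y * ((c • u) (Set.projIcc a b hab.le y)) = _
        simp [hvdef, Set.IccExtend, smul_eq_mul]
        ring } with hLdef
  have hLapply : ∀ (u : C(Set.Icc a b, ℂ)) (x : Set.Icc a b), L u x = G u x := fun _ _ => rfl
  have hLnorm : ∀ u : C(Set.Icc a b, ℂ), ‖L u‖ ≤ M * ‖u‖ := by
    intro u
    refine (ContinuousMap.norm_le _ (by positivity)).2 fun x => ?_
    rw [hLapply]
    exact hbound u x x.2
  set K : C(Set.Icc a b, ℂ) →L[ℂ] C(Set.Icc a b, ℂ) := L.mkContinuous M hLnorm with hKdef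
  have hKapply : ∀ (u : C(Set.Icc a b, ℂ)) (x : Set.Icc a b), K u x = G u x := fun _ _ => rfl
  refine ⟨K, ?_, ?_⟩
  · -- the integral formula
    intro u x
    have h1 : ∫ (y : Set.Icc a b), k (x : ℝ) (y : ℝ) * v u (y : ℝ) =
        ∫ y in Set.Icc a b, k (x : ℝ) y * v u y :=
      integral_subtype measurableSet_Icc (fun y => k (x : ℝ) y * v u y)
    rw [hKapply, hGdef]
    show (∫ y in Set.Icc a b, k (x : ℝ) y * v u y) = _
    rw [← h1]
    refine integral_congr_ae (Filter.Eventually.of_forall fun y => ?_)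
    exact congrArg _ (Set.IccExtend_val hab.le u y)
  · -- compactness via Arzelà–Ascoli
    set S : Set C(Set.Icc a b, ℂ) := ⇑K '' Metric.closedBall 0 1 with hSdef
    set e := ContinuousMap.isometryEquivBoundedOfCompact (↥(Set.Icc a b)) ℂ with hedef
    set A : Set (BoundedContinuousFunction (↥(Set.Icc a b)) ℂ) := ⇑e '' S with hAdef
    have heapp : ∀ (f : C(Set.Icc a b, ℂ)) (x : Set.Icc a b), e f x = f x := fun _ _ => rfl
    -- functions in A take values in a fixed compact ball
    have hin : ∀ f ∈ A, ∀ x : Set.Icc a b, f x ∈ Metric.closedBall (0 : ℂ) M := by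
      rintro f ⟨g, ⟨u, hu, rfl⟩, rfl⟩ x
      rw [Metric.mem_closedBall, dist_zero_right, heapp, hKapply]
      have hu1 : ‖u‖ ≤ 1 := by rwa [← mem_closedBall_zero_iff]
      calc ‖G u x‖ ≤ M * ‖u‖ := hbound u x x.2
        _ ≤ M * 1 := mul_le_mul_of_nonneg_left hu1 hM0
        _ = M := mul_one M
    -- equicontinuity
    have hequi : Equicontinuous ((↑) : A → Set.Icc a b → ℂ) := by
      intro x₀
      rw [Metric.equicontinuousAt_iff_right]
      intro ε hε
      have hval : Filter.Tendsto (Subtype.val : Set.Icc a b → ℝ) (nhds x₀)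
          (nhdsWithin (x₀ : ℝ) (Set.Icc a b)) := by
        rw [← map_nhds_subtype_val]
        exact Filter.tendsto_map
      have htend : Filter.Tendsto
          (fun x : Set.Icc a b => ∫ y in Set.Icc a b, ‖k (x : ℝ) y - k (x₀ : ℝ) y‖)
          (nhds x₀) (nhds 0) := (hcont (x₀ : ℝ) x₀.2).comp hval
      have hev : ∀ᶠ x : Set.Icc a b in nhds x₀,
          (∫ y in Set.Icc a b, ‖k (x : ℝ) y - k (x₀ : ℝ) y‖) < ε :=
        htend (Iio_mem_nhds hε)
      filter_upwards [hev] with x hx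
      rintro ⟨f, ⟨g, ⟨u, hu, rfl⟩, rfl⟩⟩
      have hu1 : ‖u‖ ≤ 1 := by rwa [← mem_closedBall_zero_iff]
      show dist (e (K u) x₀) (e (K u) x) < ε
      rw [dist_eq_norm, heapp, heapp, hKapply, hKapply]
      calc ‖G u x₀ - G u x‖ ≤ ‖u‖ * ∫ y in Set.Icc a b, ‖k (x₀ : ℝ) y - k (x : ℝ) y‖ :=
            key u x₀ x x₀.2 x.2
        _ = ‖u‖ * ∫ y in Set.Icc a b, ‖k (x : ℝ) y - k (x₀ : ℝ) y‖ := by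
            congr 1
            refine integral_congr_ae (Filter.Eventually.of_forall fun y => ?_)
            exact norm_sub_rev _ _
        _ ≤ 1 * ∫ y in Set.Icc a b, ‖k (x : ℝ) y - k (x₀ : ℝ) y‖ :=
            mul_le_mul_of_nonneg_right hu1 (integral_nonneg fun y => norm_nonneg _)
        _ = ∫ y in Set.Icc a b, ‖k (x : ℝ) y - k (x₀ : ℝ) y‖ := one_mul _
        _ < ε := hx
    have hAcomp : IsCompact (closure A) :=
      BoundedContinuousFunction.arzela_ascoli (Metric.closedBall (0 : ℂ) M)
        (isCompact_closedBall _ _) A (fun f x hf => hin f hf x) hequi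
    -- transfer back through the isometry equivalence
    have himg : closure S = ⇑e.symm '' closure A := by
      have h2 : ⇑e.symm '' closure A = closure (⇑e.symm '' A) := by
        exact e.symm.toHomeomorph.image_closure A
      rw [h2, hAdef, ← Set.image_comp]
      simp [Function.comp_def]
    rw [himg]
    exact hAcomp.image e.symm.continuous
end

section
/- For every z ∈ ℂ, the family n ↦ 1 + 16z²/(π²(2n+1)²) (indexed by integers n ≥ 0) is multipliable and ∏_{n=0}^∞ (1 + 16z²/(π²(2n+1)²)) = cosh(2z). Equivalently, with λ_n = 4/(π(2n+1)), ∏_{n=0}^∞ [(1 − iλ_n z)·exp(iλ_n z)·(1 + iλ_n z)·exp(−iλ_n z)] = cosh(2z). -/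
open Complex Real Filter Finset Topology

private lemma nz1 (N : ℕ) : (2 * (N : ℂ) + 1) ≠ 0 := by
  have : ((2 * N + 1 : ℕ) : ℂ) ≠ 0 := Nat.cast_ne_zero.mpr (by omega)
  push_cast at this
  convert this using 2

private lemma nz3 (N : ℕ) : (2 * (N : ℂ) + 3) ≠ 0 := by
  have : ((2 * N + 3 : ℕ) : ℂ) ≠ 0 := Nat.cast_ne_zero.mpr (by omega)
  push_cast at this
  convert this using 2

private lemma nzN1 (N : ℕ) : ((N : ℂ) + 1) ≠ 0 := by
  have : ((N + 1 : ℕ) : ℂ) ≠ 0 := Nat.cast_ne_zero.mpr (by omega)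
  push_cast at this
  convert this using 2

private lemma key_identity (u : ℂ) (N : ℕ) :
    (∏ m ∈ Finset.range N, (1 - u ^ 2 / (2 * (m : ℂ) + 1) ^ 2)) * (2 * (N : ℂ) + 1 + u)
      = (1 + u) * (∏ j ∈ Finset.range N, (1 - ((u + 1) / 2) ^ 2 / ((j : ℂ) + 1) ^ 2))
        * (∏ i ∈ Finset.range N, ((2 * (i : ℂ) + 2) / (2 * (i : ℂ) + 1) * ((2 * (i : ℂ) + 2) / (2 * (i : ℂ) + 3))))
        * (2 * (N : ℂ) + 1) := by
  induction N with
  | zero => simp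
  | succ N ih =>
    have hc := nz1 N
    have hc3 := nz3 N
    have hN1 := nzN1 N
    rw [Finset.prod_range_succ, Finset.prod_range_succ, Finset.prod_range_succ]
    push_cast
    set P := ∏ m ∈ Finset.range N, (1 - u ^ 2 / (2 * (m : ℂ) + 1) ^ 2) with hP
    set S := ∏ j ∈ Finset.range N, (1 - ((u + 1) / 2) ^ 2 / ((j : ℂ) + 1) ^ 2) with hS
    set W := ∏ i ∈ Finset.range N, ((2 * (i : ℂ) + 2) / (2 * (i : ℂ) + 1) * ((2 * (i : ℂ) + 2) / (2 * (i : ℂ) + 3))) with hW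
    have step1 : P * (1 - u ^ 2 / (2 * (N : ℂ) + 1) ^ 2) * (2 * ((N : ℂ) + 1) + 1 + u)
        = (P * (2 * (N : ℂ) + 1 + u)) * ((2 * (N : ℂ) + 1 - u) * (2 * (N : ℂ) + 3 + u) / (2 * (N : ℂ) + 1) ^ 2) := by
      field_simp
      ring
    rw [step1, ih]
    field_simp
    ring

private lemma tendsto_inv_two_n_one : Tendsto (fun N : ℕ => (2 * (N : ℂ) + 1)⁻¹) atTop (𝓝 0) := by
  have h1 : Tendsto (fun N : ℕ => (2 * (N : ℝ) + 1)) atTop atTop := by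
    apply Filter.tendsto_atTop_add_const_right
    exact (tendsto_natCast_atTop_atTop).const_mul_atTop two_pos
  have h2 : Tendsto (fun N : ℕ => (2 * (N : ℝ) + 1)⁻¹) atTop (𝓝 0) := h1.inv_tendsto_atTop
  have h3 := (Complex.continuous_ofReal.tendsto 0).comp h2
  refine h3.congr fun N => ?_
  simp only [Function.comp_apply, Complex.ofReal_inv]
  push_cast
  rfl

private lemma tendsto_P (u : ℂ) (hu : 1 + u ≠ 0) :
    Tendsto (fun N : ℕ => ∏ m ∈ Finset.range N, (1 - u ^ 2 / (2 * (m : ℂ) + 1) ^ 2)) atTop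
      (𝓝 (Complex.cos ((π : ℂ) * u / 2))) := by
  have hpi : (π : ℂ) ≠ 0 := Complex.ofReal_ne_zero.mpr Real.pi_ne_zero
  have hE := Complex.tendsto_euler_sin_prod ((u + 1) / 2)
  -- Wallis, complexified
  have hWr := Real.tendsto_prod_pi_div_two
  have hW : Tendsto (fun k : ℕ => ∏ i ∈ Finset.range k,
      ((2 * (i : ℂ) + 2) / (2 * (i : ℂ) + 1) * ((2 * (i : ℂ) + 2) / (2 * (i : ℂ) + 3)))) atTop
      (𝓝 ((π : ℂ) / 2)) := by
    have h := (Complex.continuous_ofReal.tendsto (π / 2)).comp hWr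
    have h2 : Tendsto (fun k : ℕ => ((∏ i ∈ Finset.range k,
        ((2 * (i : ℝ) + 2) / (2 * (i : ℝ) + 1) * ((2 * (i : ℝ) + 2) / (2 * (i : ℝ) + 3))) : ℝ) : ℂ)) atTop
        (𝓝 (((π / 2 : ℝ) : ℂ))) := h
    have h3 : (((π / 2 : ℝ)) : ℂ) = (π : ℂ) / 2 := by push_cast; ring
    rw [h3] at h2
    refine h2.congr fun k => ?_
    push_cast
    rfl
  have hG : Tendsto (fun N : ℕ => ((π : ℂ) * ((u + 1) / 2) * ∏ j ∈ Finset.range N, (1 - ((u + 1) / 2) ^ 2 / ((j : ℂ) + 1) ^ 2))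
      * ((2 / (π : ℂ)) * ∏ i ∈ Finset.range N,
        ((2 * (i : ℂ) + 2) / (2 * (i : ℂ) + 1) * ((2 * (i : ℂ) + 2) / (2 * (i : ℂ) + 3))))) atTop
      (𝓝 (Complex.sin ((π : ℂ) * ((u + 1) / 2)))) := by
    have h := hE.mul ((tendsto_const_nhds (x := (2 / (π : ℂ)))).mul hW)
    have hone : Complex.sin ((π : ℂ) * ((u + 1) / 2)) * (2 / (π : ℂ) * ((π : ℂ) / 2)) = Complex.sin ((π : ℂ) * ((u + 1) / 2)) := by
      field_simp
    rwa [hone] at h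
  -- identify with P N * fq N
  set fq : ℕ → ℂ := fun N => (2 * (N : ℂ) + 1 + u) / (2 * (N : ℂ) + 1) with hfq
  have heq : ∀ N : ℕ, ((π : ℂ) * ((u + 1) / 2) * ∏ j ∈ Finset.range N, (1 - ((u + 1) / 2) ^ 2 / ((j : ℂ) + 1) ^ 2))
      * ((2 / (π : ℂ)) * ∏ i ∈ Finset.range N,
        ((2 * (i : ℂ) + 2) / (2 * (i : ℂ) + 1) * ((2 * (i : ℂ) + 2) / (2 * (i : ℂ) + 3))))
      = (∏ m ∈ Finset.range N, (1 - u ^ 2 / (2 * (m : ℂ) + 1) ^ 2)) * fq N := by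
    intro N
    have hk := key_identity u N
    have hc := nz1 N
    set P := ∏ m ∈ Finset.range N, (1 - u ^ 2 / (2 * (m : ℂ) + 1) ^ 2) with hP
    set S := ∏ j ∈ Finset.range N, (1 - ((u + 1) / 2) ^ 2 / ((j : ℂ) + 1) ^ 2) with hS
    set W := ∏ i ∈ Finset.range N, ((2 * (i : ℂ) + 2) / (2 * (i : ℂ) + 1) * ((2 * (i : ℂ) + 2) / (2 * (i : ℂ) + 3))) with hW
    have h1 : P * fq N = (P * (2 * (N : ℂ) + 1 + u)) / (2 * (N : ℂ) + 1) := by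
      rw [hfq]; ring
    rw [h1, hk]
    field_simp
    ring
  have hG' : Tendsto (fun N : ℕ =>
      (∏ m ∈ Finset.range N, (1 - u ^ 2 / (2 * (m : ℂ) + 1) ^ 2)) * fq N) atTop
      (𝓝 (Complex.sin ((π : ℂ) * ((u + 1) / 2)))) := hG.congr heq
  have hfq1 : Tendsto fq atTop (𝓝 1) := by
    have hform : ∀ N : ℕ, fq N = 1 + u * (2 * (N : ℂ) + 1)⁻¹ := by
      intro N
      have hc := nz1 N
      rw [hfq]
      field_simp
    have h2 : Tendsto (fun N : ℕ => 1 + u * (2 * (N : ℂ) + 1)⁻¹) atTop (𝓝 (1 + u * 0)) :=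
      tendsto_const_nhds.add (tendsto_const_nhds.mul tendsto_inv_two_n_one)
    rw [show (1 : ℂ) + u * 0 = 1 by ring] at h2
    exact h2.congr (fun N => (hform N).symm)
  have hne : ∀ᶠ N : ℕ in atTop, fq N ≠ 0 := hfq1.eventually_ne one_ne_zero
  have hdiv : Tendsto (fun N : ℕ =>
      ((∏ m ∈ Finset.range N, (1 - u ^ 2 / (2 * (m : ℂ) + 1) ^ 2)) * fq N) / fq N) atTop
      (𝓝 (Complex.sin ((π : ℂ) * ((u + 1) / 2)))) := by
    have h := hG'.div hfq1 one_ne_zero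
    rw [div_one] at h
    exact h
  have hcongr : Tendsto (fun N : ℕ =>
      ∏ m ∈ Finset.range N, (1 - u ^ 2 / (2 * (m : ℂ) + 1) ^ 2)) atTop
      (𝓝 (Complex.sin ((π : ℂ) * ((u + 1) / 2)))) := by
    apply hdiv.congr'
    filter_upwards [hne] with N hN
    field_simp
  have hsin : Complex.sin ((π : ℂ) * ((u + 1) / 2)) = Complex.cos ((π : ℂ) * u / 2) := by
    have h : (π : ℂ) * ((u + 1) / 2) = (π : ℂ) * u / 2 + (π : ℂ) / 2 := by ring
    rw [h, Complex.sin_add_pi_div_two]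
  rwa [hsin] at hcongr

private lemma multipliable_aux (z : ℂ) :
    Multipliable (fun n : ℕ => 1 + 16 * z ^ 2 / ((π : ℂ) ^ 2 * (2 * (n : ℂ) + 1) ^ 2)) := by
  have hpi : (π : ℂ) ≠ 0 := Complex.ofReal_ne_zero.mpr Real.pi_ne_zero
  set c : ℂ := 16 * z ^ 2 / (π : ℂ) ^ 2 with hc
  set k : ℕ := ⌈‖c‖⌉₊ + 1 with hk
  set w : ℕ → ℂ := fun n => 16 * z ^ 2 / ((π : ℂ) ^ 2 * (2 * (n : ℂ) + 1) ^ 2) with hw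
  have hwnorm : ∀ n : ℕ, ‖w n‖ = ‖c‖ * ((2 * (n : ℝ) + 1) ^ 2)⁻¹ := by
    intro n
    have h : w n = c * ((2 * (n : ℂ) + 1) ^ 2)⁻¹ := by
      rw [hw, hc]; field_simp
    rw [h, norm_mul, norm_inv, norm_pow]
    congr 2
    have h2 : (2 * (n : ℂ) + 1) = ((2 * (n : ℝ) + 1 : ℝ) : ℂ) := by push_cast; rfl
    rw [h2, Complex.norm_real]
    rw [Real.norm_eq_abs, abs_of_pos (by positivity)]
  have hca : ‖c‖ ≤ (⌈‖c‖⌉₊ : ℝ) := Nat.le_ceil _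
  have hhalf : ∀ n : ℕ, ‖w (n + k)‖ ≤ 1 / 2 := by
    intro n
    rw [hwnorm]
    have hk' : ((n + k : ℕ) : ℝ) = (n : ℝ) + (⌈‖c‖⌉₊ : ℝ) + 1 := by rw [hk]; push_cast; ring
    rw [hk']
    set a : ℝ := (⌈‖c‖⌉₊ : ℝ) with hA
    have hn : (0 : ℝ) ≤ n := Nat.cast_nonneg n
    have ha : (0 : ℝ) ≤ a := le_trans (norm_nonneg c) hca
    have hx2 : 2 * ((n : ℝ) + a + 1) + 1 ≤ (2 * ((n : ℝ) + a + 1) + 1) ^ 2 := by nlinarith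
    rw [← div_eq_mul_inv, div_le_iff₀ (by positivity)]
    nlinarith
  have hne : ∀ n : ℕ, (1 : ℂ) + w (n + k) ≠ 0 := by
    intro n h0
    have h1 : w (n + k) = -1 := by linear_combination h0
    have h2 := hhalf n
    rw [h1] at h2
    norm_num at h2
  have hsummable : Summable (fun n : ℕ => Complex.log (1 + w (n + k))) := by
    have hbound : Summable (fun n : ℕ => (3 / 2 : ℝ) * (‖c‖ * (((n : ℝ) + 1) ^ 2)⁻¹)) := by
      apply Summable.mul_left
      apply Summable.mul_left
      have hs : Summable (fun n : ℕ => (((n : ℝ) + 1) ^ 2)⁻¹) := by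
        have h := summable_one_div_nat_pow.mpr (le_refl 2)
        have h2 := (summable_nat_add_iff 1).mpr h
        apply h2.congr
        intro n
        push_cast
        rw [one_div]
      exact hs
    apply Summable.of_norm_bounded hbound
    intro n
    have h1 : ‖Complex.log (1 + w (n + k))‖ ≤ 3 / 2 * ‖w (n + k)‖ :=
      Complex.norm_log_one_add_half_le_self (hhalf n)
    have h2 : ‖w (n + k)‖ ≤ ‖c‖ * (((n : ℝ) + 1) ^ 2)⁻¹ := by
      rw [hwnorm]
      have hle : ((n : ℝ) + 1) ^ 2 ≤ (2 * ((n + k : ℕ) : ℝ) + 1) ^ 2 := by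
        push_cast
        nlinarith [Nat.cast_nonneg (α := ℝ) n, Nat.cast_nonneg (α := ℝ) k]
      exact mul_le_mul_of_nonneg_left
        (inv_anti₀ (by positivity) hle) (norm_nonneg c)
    calc ‖Complex.log (1 + w (n + k))‖ ≤ 3 / 2 * ‖w (n + k)‖ := h1
      _ ≤ 3 / 2 * (‖c‖ * (((n : ℝ) + 1) ^ 2)⁻¹) := by
          apply mul_le_mul_of_nonneg_left h2; norm_num
  have hmk : Multipliable (fun n : ℕ => (1 : ℂ) + w (n + k)) := by
    exact Complex.multipliable_of_summable_log hsummable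
  exact Multipliable.comp_nat_add (k := k) hmk

private lemma tprod_aux (z : ℂ) :
    Multipliable (fun n : ℕ => 1 + 16 * z ^ 2 / ((π : ℂ) ^ 2 * (2 * (n : ℂ) + 1) ^ 2)) ∧
    (∏' n : ℕ, (1 + 16 * z ^ 2 / ((π : ℂ) ^ 2 * (2 * (n : ℂ) + 1) ^ 2))) =
      Complex.cosh (2 * z) := by
  have hpi : (π : ℂ) ≠ 0 := Complex.ofReal_ne_zero.mpr Real.pi_ne_zero
  have hm := multipliable_aux z
  refine ⟨hm, ?_⟩
  set u₀ : ℂ := 4 * Complex.I * z / (π : ℂ) with hu₀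
  have hu₀sq : u₀ ^ 2 = -(16 * z ^ 2 / (π : ℂ) ^ 2) := by
    have h1 : u₀ ^ 2 = Complex.I ^ 2 * (16 * z ^ 2 / (π : ℂ) ^ 2) := by rw [hu₀]; ring
    rw [h1, Complex.I_sq]; ring
  obtain ⟨u, hu1, husq⟩ : ∃ u : ℂ, 1 + u ≠ 0 ∧ u ^ 2 = u₀ ^ 2 := by
    by_cases h : u₀ = -1
    · exact ⟨1, by norm_num, by rw [h]; norm_num⟩
    · exact ⟨u₀, fun h0 => h (by linear_combination h0), rfl⟩
  have hfun : (fun n : ℕ => 1 + 16 * z ^ 2 / ((π : ℂ) ^ 2 * (2 * (n : ℂ) + 1) ^ 2))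
      = fun n : ℕ => 1 - u ^ 2 / (2 * (n : ℂ) + 1) ^ 2 := by
    funext n
    rw [husq, hu₀sq]
    have hc := nz1 n
    field_simp
    ring
  have hT := tendsto_P u hu1
  have hcos : Complex.cos ((π : ℂ) * u / 2) = Complex.cosh (2 * z) := by
    have hsq : ((π : ℂ) * u / 2) ^ 2 = (2 * z * Complex.I) ^ 2 := by
      have hL : ((π : ℂ) * u / 2) ^ 2 = (π : ℂ) ^ 2 * u ^ 2 / 4 := by ring
      have hR : (2 * z * Complex.I) ^ 2 = 4 * z ^ 2 * Complex.I ^ 2 := by ring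
      rw [hL, hR, husq, hu₀sq, Complex.I_sq]
      field_simp
      ring
    have heven : (π : ℂ) * u / 2 = 2 * z * Complex.I ∨ (π : ℂ) * u / 2 = -(2 * z * Complex.I) := by
      have h0 : ((π : ℂ) * u / 2 - 2 * z * Complex.I) * ((π : ℂ) * u / 2 + 2 * z * Complex.I) = 0 := by
        linear_combination hsq
      rcases mul_eq_zero.mp h0 with h | h
      · left; linear_combination h
      · right; linear_combination h
    rcases heven with h | h
    · rw [h, Complex.cos_mul_I]
    · rw [h, Complex.cos_neg, Complex.cos_mul_I]
  have htendsto := hm.hasProd.tendsto_prod_nat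
  rw [hfun] at htendsto
  have huniq := tendsto_nhds_unique htendsto hT
  rw [hfun, huniq, hcos]

/-- The 2-modified (Hilbert–Schmidt) Fredholm determinant of the integral
operator on `L²(−1,1)` with kernel `sgn(x−y)`, whose eigenvalues are
`λ_n = −4i/(π(2n+1))` together with their conjugates: for every `z ∈ ℂ`,
`∏_{n≥0} (1 + 16z²/(π²(2n+1)²)) = cosh(2z)`; equivalently, with
`λ_n = 4/(π(2n+1))`,
`∏_{n≥0} (1 − iλ_n z)e^{iλ_n z}(1 + iλ_n z)e^{−iλ_n z} = cosh(2z)`. -/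
theorem stmt_13 (z : ℂ) :
    Multipliable (fun n : ℕ =>
      1 + 16 * z ^ 2 / ((π : ℂ) ^ 2 * (2 * (n : ℂ) + 1) ^ 2)) ∧
    (∏' n : ℕ, (1 + 16 * z ^ 2 / ((π : ℂ) ^ 2 * (2 * (n : ℂ) + 1) ^ 2))) =
      Complex.cosh (2 * z) ∧
    Multipliable (fun n : ℕ =>
      (1 - Complex.I * (4 / ((π : ℂ) * (2 * (n : ℂ) + 1))) * z) *
        Complex.exp (Complex.I * (4 / ((π : ℂ) * (2 * (n : ℂ) + 1))) * z) *
        ((1 + Complex.I * (4 / ((π : ℂ) * (2 * (n : ℂ) + 1))) * z) *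
          Complex.exp (-(Complex.I * (4 / ((π : ℂ) * (2 * (n : ℂ) + 1))) * z)))) ∧
    (∏' n : ℕ,
      (1 - Complex.I * (4 / ((π : ℂ) * (2 * (n : ℂ) + 1))) * z) *
        Complex.exp (Complex.I * (4 / ((π : ℂ) * (2 * (n : ℂ) + 1))) * z) *
        ((1 + Complex.I * (4 / ((π : ℂ) * (2 * (n : ℂ) + 1))) * z) *
          Complex.exp (-(Complex.I * (4 / ((π : ℂ) * (2 * (n : ℂ) + 1))) * z)))) =
      Complex.cosh (2 * z) := by
  have hpi : (π : ℂ) ≠ 0 := Complex.ofReal_ne_zero.mpr Real.pi_ne_zero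
  obtain ⟨hm, ht⟩ := tprod_aux z
  have hfun : (fun n : ℕ =>
      (1 - Complex.I * (4 / ((π : ℂ) * (2 * (n : ℂ) + 1))) * z) *
        Complex.exp (Complex.I * (4 / ((π : ℂ) * (2 * (n : ℂ) + 1))) * z) *
        ((1 + Complex.I * (4 / ((π : ℂ) * (2 * (n : ℂ) + 1))) * z) *
          Complex.exp (-(Complex.I * (4 / ((π : ℂ) * (2 * (n : ℂ) + 1))) * z))))
      = fun n : ℕ => 1 + 16 * z ^ 2 / ((π : ℂ) ^ 2 * (2 * (n : ℂ) + 1) ^ 2) := by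
    funext n
    have hc := nz1 n
    set a : ℂ := Complex.I * (4 / ((π : ℂ) * (2 * (n : ℂ) + 1))) * z with ha
    have hexp : Complex.exp a * Complex.exp (-a) = 1 := by
      rw [← Complex.exp_add]; simp
    have hrearr : (1 - a) * Complex.exp a * ((1 + a) * Complex.exp (-a))
        = (1 - a) * (1 + a) * (Complex.exp a * Complex.exp (-a)) := by ring
    rw [hrearr, hexp, mul_one]
    have haa : a ^ 2 = -(16 * z ^ 2 / ((π : ℂ) ^ 2 * (2 * (n : ℂ) + 1) ^ 2)) := by
      have hb : (4 / ((π : ℂ) * (2 * (n : ℂ) + 1))) ^ 2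
          = 16 / ((π : ℂ) ^ 2 * (2 * (n : ℂ) + 1) ^ 2) := by
        rw [div_pow]
        congr 1
        · norm_num
        · ring
      have h1 : a ^ 2 = Complex.I ^ 2 * ((4 / ((π : ℂ) * (2 * (n : ℂ) + 1))) ^ 2 * z ^ 2) := by
        rw [ha]; ring
      rw [h1, hb, Complex.I_sq]
      ring
    have h2 : (1 - a) * (1 + a) = 1 - a ^ 2 := by ring
    rw [h2, haa]
    ring
  rw [hfun]
  exact ⟨hm, ht, hm, ht⟩
end

section
/- For n ∈ ℕ with n ≥ 1, let A(x₁,…,x_n) be the n × n real matrix with entries A_{p,q} = sgn(x_p − x_q) (so the diagonal entries vanish), where sgn(t) = 1 for t > 0, sgn(t) = −1 for t < 0 and sgn(0) = 0. Then ∫_{[−1,1]^n} det A(x₁,…,x_n) dx₁⋯dx_n = 2^n if n is even, and = 0 if n is odd. -/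
open MeasureTheory

/-- The standard sign matrix. -/
noncomputable def Mmat (m : ℕ) : Matrix (Fin m) (Fin m) ℝ :=
  Matrix.of fun p q : Fin m => Real.sign ((p : ℝ) - (q : ℝ))

lemma Mmat_step (m : ℕ) : (Mmat (m + 2)).det = (Mmat m).det := by
  classical
  let D : Matrix (Fin 2) (Fin 2) ℝ := !![0, -1; 1, 0]
  let B : Matrix (Fin m) (Fin 2) ℝ := fun _ _ => (-1 : ℝ)
  let C : Matrix (Fin 2) (Fin m) ℝ := fun _ _ => (1 : ℝ)
  letI : Invertible D := by
    refine ⟨!![0, 1; -1, 0], ?_, ?_⟩ <;>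
      · ext i j
        fin_cases i <;> fin_cases j <;>
          simp [D, Matrix.mul_apply, Fin.sum_univ_two, Matrix.one_apply]
  have hsub : (Mmat (m + 2)).submatrix finSumFinEquiv finSumFinEquiv =
      Matrix.fromBlocks (Mmat m) B C D := by
    ext i j
    rcases i with p | p <;> rcases j with q | q
    · simp [Mmat, Matrix.submatrix_apply, finSumFinEquiv]
    · have h : ((Fin.castAdd 2 p : Fin (m + 2)) : ℝ) - ((Fin.natAdd m q : Fin (m + 2)) : ℝ) < 0 := by
        simp only [Fin.coe_castAdd, Fin.coe_natAdd]
        have hp : (p : ℕ) < m := p.isLt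
        push_cast
        have : (p : ℝ) < m + q := by
          have : (p : ℝ) < m := by exact_mod_cast hp
          have hq : (0 : ℝ) ≤ q := by positivity
          linarith
        linarith
      change _ = B p q
      simpa [Mmat, Matrix.submatrix_apply, finSumFinEquiv, B] using Real.sign_of_neg h
    · have h : (0 : ℝ) < ((Fin.natAdd m p : Fin (m + 2)) : ℝ) - ((Fin.castAdd 2 q : Fin (m + 2)) : ℝ) := by
        simp only [Fin.coe_castAdd, Fin.coe_natAdd]
        have hq : (q : ℕ) < m := q.isLt
        push_cast
        have : (q : ℝ) < m + p := by
          have : (q : ℝ) < m := by exact_mod_cast hq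
          have hp : (0 : ℝ) ≤ p := by positivity
          linarith
        linarith
      change _ = C p q
      simpa [Mmat, Matrix.submatrix_apply, finSumFinEquiv, C] using Real.sign_of_pos h
    · fin_cases p <;> fin_cases q <;>
        · simp only [Mmat, Matrix.submatrix_apply, finSumFinEquiv, Equiv.coe_fn_mk,
            Matrix.of_apply, Fin.coe_natAdd, D]
          norm_num [Real.sign_zero, Real.sign_one, Real.sign_neg]
  have hBDC : B * ⅟ D * C = 0 := by
    have hD : ⅟ D = !![0, 1; -1, 0] := rfl
    ext i j
    simp only [hD, Matrix.mul_apply, Fin.sum_univ_two]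
    simp [B, C]
  calc (Mmat (m + 2)).det
      = ((Mmat (m + 2)).submatrix finSumFinEquiv finSumFinEquiv).det :=
        (Matrix.det_submatrix_equiv_self _ _).symm
    _ = (Matrix.fromBlocks (Mmat m) B C D).det := by rw [hsub]
    _ = D.det * (Mmat m - B * ⅟ D * C).det := Matrix.det_fromBlocks₂₂ _ _ _ _
    _ = (Mmat m).det := by
        rw [hBDC, sub_zero]
        simp [D, Matrix.det_fin_two_of]

lemma Mmat_det_even : ∀ k : ℕ, (Mmat (2 * k)).det = 1 := by
  intro k
  induction k with
  | zero => simp [Mmat, Matrix.det_isEmpty]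
  | succ k ih =>
      have h : 2 * (k + 1) = 2 * k + 2 := by ring
      rw [h, Mmat_step, ih]

lemma det_sign_of_injective {n : ℕ} (x : Fin n → ℝ) (hx : Function.Injective x) :
    (Matrix.of fun p q : Fin n => Real.sign (x p - x q)).det = (Mmat n).det := by
  classical
  set σ := Tuple.sort x with hσ
  have hmono : Monotone (x ∘ σ) := Tuple.monotone_sort x
  have hsm : StrictMono (x ∘ σ) :=
    hmono.strictMono_of_injective (hx.comp σ.injective)
  have key : (Matrix.of fun p q : Fin n => Real.sign (x p - x q)).submatrix σ σ = Mmat n := by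
    ext p q
    simp only [Matrix.submatrix_apply, Matrix.of_apply, Mmat]
    rcases lt_trichotomy p q with h | h | h
    · have h1 : x (σ p) - x (σ q) < 0 := sub_neg.mpr (hsm h)
      have h2 : ((p : ℕ) : ℝ) - ((q : ℕ) : ℝ) < 0 :=
        sub_neg.mpr (by exact_mod_cast (Fin.lt_iff_val_lt_val.mp h))
      rw [Real.sign_of_neg h1, Real.sign_of_neg h2]
    · subst h; simp [Real.sign_zero]
    · have h1 : 0 < x (σ p) - x (σ q) := sub_pos.mpr (hsm h)
      have h2 : (0:ℝ) < ((p : ℕ) : ℝ) - ((q : ℕ) : ℝ) :=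
        sub_pos.mpr (by exact_mod_cast (Fin.lt_iff_val_lt_val.mp h))
      rw [Real.sign_of_pos h1, Real.sign_of_pos h2]
  calc (Matrix.of fun p q : Fin n => Real.sign (x p - x q)).det
      = ((Matrix.of fun p q : Fin n => Real.sign (x p - x q)).submatrix σ σ).det :=
        (Matrix.det_submatrix_equiv_self _ _).symm
    _ = (Mmat n).det := by rw [key]

lemma det_sign_odd {n : ℕ} (hodd : ¬ Even n) (x : Fin n → ℝ) :
    (Matrix.of fun p q : Fin n => Real.sign (x p - x q)).det = 0 := by
  set A : Matrix (Fin n) (Fin n) ℝ := Matrix.of fun p q : Fin n => Real.sign (x p - x q) with hA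
  have hT : A.transpose = -A := by
    ext p q
    simp only [Matrix.transpose_apply, Matrix.neg_apply, hA, Matrix.of_apply]
    rw [show x q - x p = -(x p - x q) by ring, Real.sign_neg]
  have h1 : A.det = (-1 : ℝ) ^ n * A.det := by
    conv_lhs => rw [← Matrix.det_transpose A, hT, Matrix.det_neg]
    simp
  have h2 : (-1 : ℝ) ^ n = -1 := (Nat.not_even_iff_odd.mp hodd).neg_one_pow
  rw [h2] at h1
  linarith [h1]

lemma measure_not_injective (n : ℕ) :
    volume {x : Fin n → ℝ | ¬ Function.Injective x} = 0 := by
  classical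
  have hsub : {x : Fin n → ℝ | ¬ Function.Injective x} ⊆
      ⋃ (p : Fin n) (q : Fin n) (_ : p ≠ q), {x : Fin n → ℝ | x p = x q} := by
    intro x hx
    simp only [Set.mem_setOf_eq, Function.Injective, not_forall] at hx
    obtain ⟨p, q, hpq, hne⟩ := hx
    exact Set.mem_iUnion.mpr ⟨p, Set.mem_iUnion.mpr ⟨q, Set.mem_iUnion.mpr ⟨hne, hpq⟩⟩⟩
  refine measure_mono_null hsub ?_
  refine measure_iUnion_null fun p => measure_iUnion_null fun q => measure_iUnion_null fun hpq => ?_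
  set ℓ : (Fin n → ℝ) →ₗ[ℝ] ℝ := (LinearMap.proj p : (Fin n → ℝ) →ₗ[ℝ] ℝ) - (LinearMap.proj q : (Fin n → ℝ) →ₗ[ℝ] ℝ) with hℓ
  have hker : {x : Fin n → ℝ | x p = x q} = (LinearMap.ker ℓ : Set (Fin n → ℝ)) := by
    ext x
    simp [hℓ, LinearMap.mem_ker, sub_eq_zero]
  rw [hker]
  refine Measure.addHaar_submodule volume _ ?_
  intro htop
  have h1 : Pi.single p (1 : ℝ) ∈ LinearMap.ker ℓ := htop ▸ Submodule.mem_top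
  simp only [LinearMap.mem_ker, hℓ, LinearMap.sub_apply, LinearMap.proj_apply] at h1
  rw [Pi.single_eq_same, Pi.single_eq_of_ne (Ne.symm hpq)] at h1
  norm_num at h1

/-- The coefficients of the 2-modified Fredholm determinant of the kernel
`sgn(x−y)` on `L²(−1,1)`: for `n ≥ 1`, the integral over the cube `[−1,1]^n`
of `det (sgn(x_p − x_q))_{p,q}` equals `2^n` when `n` is even and `0` when `n`
is odd. -/
theorem stmt_18 (n : ℕ) (hn : 1 ≤ n) :
    (∫ x in Set.univ.pi (fun _ : Fin n => Set.Icc (-1 : ℝ) 1),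
        Matrix.det (Matrix.of fun p q : Fin n => Real.sign (x p - x q))) =
      if Even n then (2 : ℝ) ^ n else 0 := by
  by_cases he : Even n
  · rw [if_pos he]
    obtain ⟨k, hk⟩ := he
    have hMdet : (Mmat n).det = 1 := by
      have : n = 2 * k := by omega
      rw [this]; exact Mmat_det_even k
    have hae : ∀ᵐ x : Fin n → ℝ,
        (Matrix.of fun p q : Fin n => Real.sign (x p - x q)).det = 1 := by
      have hae0 : ∀ᵐ x : Fin n → ℝ, Function.Injective x := by
        rw [ae_iff]; simpa using measure_not_injective n
      filter_upwards [hae0] with x hx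
      rw [det_sign_of_injective x hx, hMdet]
    have hmeas : MeasurableSet (Set.univ.pi (fun _ : Fin n => Set.Icc (-1 : ℝ) 1)) :=
      MeasurableSet.univ_pi fun _ => measurableSet_Icc
    rw [setIntegral_congr_ae hmeas (hae.mono fun x hx _ => hx)]
    rw [setIntegral_const]
    have hvol : volume (Set.univ.pi (fun _ : Fin n => Set.Icc (-1 : ℝ) 1)) =
        (2 : ENNReal) ^ n := by
      rw [volume_pi_pi]
      simp [Real.volume_Icc]
      norm_num
    rw [measureReal_def, hvol]
    simp [ENNReal.toReal_pow]
  · rw [if_neg he]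
    have : ∀ x : Fin n → ℝ,
        (Matrix.of fun p q : Fin n => Real.sign (x p - x q)).det = 0 :=
      det_sign_odd he
    simp only [this, integral_zero]
end
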